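/- arXiv:1611.07183 — 4 statements merged into one kernel-verified Lean document; each statement's English description precedes it below -/
import Mathlib

section
/- For every irrational real number α one has 𝔨*(α) ≥ 1/2, and there exists an irrational β with 𝔨*(β) = 1/2 (for instance β = [0; b_1, 2, b_2, 2, b_3, 2, …] for any sequence of positive integers b_j with b_j → ∞). In particular, 1/2 is the minimal element of the spectrum 𝕃₂* = {𝔨*(α) : α irrational}. -/
open Filter Real Set

/-- Iterates of the Gauss map starting from `α`: `x₀ = α`, `x_{n+1} = 1 / fract (xₙ)`. -/
noncomputable def gaussIter (α : ℝ) : ℕ → ℝ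
  | 0 => α
  | n + 1 => (Int.fract (gaussIter α n))⁻¹

/-- Partial quotients of the continued fraction `α = [a₀; a₁, a₂, …]`. -/
noncomputable def cfA (α : ℝ) (n : ℕ) : ℤ := ⌊gaussIter α n⌋

/-- Denominators of convergents, with shifted index: `cfQ α 0 = q₋₁ = 0`,
`cfQ α 1 = q₀ = 1`, and `cfQ α (n+1) = qₙ` where `qₙ = aₙ q_{n-1} + q_{n-2}`. -/
noncomputable def cfQ (α : ℝ) : ℕ → ℤ
  | 0 => 0
  | 1 => 1
  | n + 2 => cfA α (n + 1) * cfQ α (n + 1) + cfQ α n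

/-- Numerators of convergents, with shifted index: `cfP α 0 = p₋₁ = 1`,
`cfP α 1 = p₀ = ⌊α⌋`, and `cfP α (n+1) = pₙ` where `pₙ = aₙ p_{n-1} + p_{n-2}`. -/
noncomputable def cfP (α : ℝ) : ℕ → ℤ
  | 0 => 1
  | 1 => ⌊α⌋
  | n + 2 => cfA α (n + 1) * cfP α (n + 1) + cfP α n

/-- `qₙ`, the denominator of the `n`-th convergent of `α`. -/
noncomputable def cfDen (α : ℝ) (n : ℕ) : ℤ := cfQ α (n + 1)

/-- `pₙ`, the numerator of the `n`-th convergent of `α`. -/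
noncomputable def cfNum (α : ℝ) (n : ℕ) : ℤ := cfP α (n + 1)

/-- `ξₙ = |qₙ α − pₙ|`. -/
noncomputable def cfXi (α : ℝ) (n : ℕ) : ℝ := |(cfDen α n : ℝ) * α - (cfNum α n : ℝ)|

/-- `ψ_α(t) = min { ‖qα‖ : q ∈ ℤ, 1 ≤ q ≤ t }`. -/
noncomputable def psiFn (α t : ℝ) : ℝ :=
  sInf {x : ℝ | ∃ p q : ℤ, 1 ≤ q ∧ (q : ℝ) ≤ t ∧ x = |(q : ℝ) * α - (p : ℝ)|}

/-- `ψ_α^[2](t)`: the same minimum but over pairs `(p,q)` that are not `(pₙ,qₙ)` for any `n ≥ 0`. -/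
noncomputable def psi2Fn (α t : ℝ) : ℝ :=
  sInf {x : ℝ | ∃ p q : ℤ, 1 ≤ q ∧ (q : ℝ) ≤ t ∧
    (∀ n : ℕ, ¬(p = cfNum α n ∧ q = cfDen α n)) ∧ x = |(q : ℝ) * α - (p : ℝ)|}

/-- `ψ_α^[2]*(t)`: the same minimum but over pairs `(p,q)` with `p/q ≠ pₙ/qₙ` for all `n ≥ 0`. -/
noncomputable def psi2sFn (α t : ℝ) : ℝ :=
  sInf {x : ℝ | ∃ p q : ℤ, 1 ≤ q ∧ (q : ℝ) ≤ t ∧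
    (∀ n : ℕ, (p : ℝ) / (q : ℝ) ≠ (cfNum α n : ℝ) / (cfDen α n : ℝ)) ∧
    x = |(q : ℝ) * α - (p : ℝ)|}

/-- `λ(α) = liminf_{t→∞} t · ψ_α(t)`. -/
noncomputable def lamOf (α : ℝ) : ℝ := Filter.liminf (fun t : ℝ => t * psiFn α t) Filter.atTop

/-- `𝔨(α) = liminf_{t→∞} t · ψ_α^[2](t)`. -/
noncomputable def kOf (α : ℝ) : ℝ := Filter.liminf (fun t : ℝ => t * psi2Fn α t) Filter.atTop

/-- `𝔨*(α) = liminf_{t→∞} t · ψ_α^[2]*(t)`. -/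
noncomputable def ksOf (α : ℝ) : ℝ := Filter.liminf (fun t : ℝ => t * psi2sFn α t) Filter.atTop

/-- `α` and `β` are equivalent: `β = (aα+b)/(cα+d)` with `a,b,c,d ∈ ℤ`, `|ad − bc| = 1`. -/
def CFEquiv (α β : ℝ) : Prop :=
  ∃ a b c d : ℤ, |a * d - b * c| = 1 ∧ β = ((a : ℝ) * α + (b : ℝ)) / ((c : ℝ) * α + (d : ℝ))

/-- The spectrum `𝕃₂ = {𝔨(α) : α irrational}`. -/
def L2 : Set ℝ := {x : ℝ | ∃ α : ℝ, Irrational α ∧ kOf α = x}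

/-- The spectrum `𝕃₂* = {𝔨*(α) : α irrational}`. -/
def L2s : Set ℝ := {x : ℝ | ∃ α : ℝ, Irrational α ∧ ksOf α = x}

/-- `𝔔(α)`: the set of positive integers at which `ψ_α^[2]` is discontinuous. -/
def QSet (α : ℝ) : Set ℤ := {m : ℤ | 0 < m ∧ ¬ ContinuousAt (psi2Fn α) (m : ℝ)}

/-- `𝔛(α)`: the set of positive integers at which `ψ_α^[2]*` is discontinuous. -/
def XSet (α : ℝ) : Set ℤ := {m : ℤ | 0 < m ∧ ¬ ContinuousAt (psi2sFn α) (m : ℝ)}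

/-- The members of the list `l` are successive elements of `S`: they belong to `S`,
are listed in increasing order, and no element of `S` lies strictly between
consecutive listed ones. -/
def SuccessiveIn (S : Set ℤ) (l : List ℤ) : Prop :=
  (∀ x ∈ l, x ∈ S) ∧ l.Chain' (fun x y => x < y ∧ ∀ z ∈ S, ¬(x < z ∧ z < y))

/-- `κ¹ₙ = (q_{n-2} + q_{n-1})(ξ_{n-2} − ξ_{n-1})`. -/
noncomputable def kap1 (α : ℝ) (n : ℕ) : ℝ :=
  ((cfDen α (n - 2) + cfDen α (n - 1) : ℤ) : ℝ) * (cfXi α (n - 2) - cfXi α (n - 1))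

/-- `κ²ₙ = (qₙ − q_{n-1})(ξ_{n-1} + ξₙ)`. -/
noncomputable def kap2 (α : ℝ) (n : ℕ) : ℝ :=
  ((cfDen α n - cfDen α (n - 1) : ℤ) : ℝ) * (cfXi α (n - 1) + cfXi α n)

/-- `κ³ₙ = (2q_{n-2} + q_{n-1})(2ξ_{n-2} − ξ_{n-1})`. -/
noncomputable def kap3 (α : ℝ) (n : ℕ) : ℝ :=
  ((2 * cfDen α (n - 2) + cfDen α (n - 1) : ℤ) : ℝ) * (2 * cfXi α (n - 2) - cfXi α (n - 1))

/-- `κ⁴ₙ = 4 q_{n-1} ξ_{n-1}`. -/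
noncomputable def kap4 (α : ℝ) (n : ℕ) : ℝ :=
  ((4 * cfDen α (n - 1) : ℤ) : ℝ) * cfXi α (n - 1)


namespace Stmt9

variable {α : ℝ}

/-- fractional parts of Gauss iterates -/
noncomputable def gF (α : ℝ) (n : ℕ) : ℝ := Int.fract (gaussIter α n)

/-- products of fractional parts -/
noncomputable def FF (α : ℝ) (n : ℕ) : ℝ := ∏ i ∈ Finset.range n, gF α i

lemma gauss_irr (hα : Irrational α) : ∀ n, Irrational (gaussIter α n)
  | 0 => hα
  | n + 1 => by
      have h := gauss_irr hα n
      have h2 : Irrational (Int.fract (gaussIter α n)) := by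
        simpa [Int.fract, sub_eq_add_neg] using h.sub_intCast ⌊gaussIter α n⌋
      exact h2.inv

lemma gF_pos (hα : Irrational α) (n : ℕ) : 0 < gF α n := by
  have h2 : Irrational (gF α n) := by
    simpa [gF, Int.fract, sub_eq_add_neg] using (gauss_irr hα n).sub_intCast ⌊gaussIter α n⌋
  rcases (Int.fract_nonneg (gaussIter α n)).lt_or_eq with h | h
  · exact h
  · exact absurd h.symm h2.ne_zero

lemma gF_lt_one (n : ℕ) : gF α n < 1 := Int.fract_lt_one _

lemma gauss_succ (α : ℝ) (n : ℕ) : gaussIter α (n + 1) = (gF α n)⁻¹ := rfl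

lemma gauss_gt_one (hα : Irrational α) (n : ℕ) : 1 < gaussIter α (n + 1) := by
  rw [gauss_succ]
  rw [one_lt_inv_iff₀]
  exact ⟨gF_pos hα n, gF_lt_one n⟩

lemma cfA_one_le (hα : Irrational α) (n : ℕ) : 1 ≤ cfA α (n + 1) :=
  Int.le_floor.mpr (by exact_mod_cast (gauss_gt_one hα n).le)

lemma key_id (hα : Irrational α) (n : ℕ) :
    gF α n * ((cfA α (n + 1) : ℝ) + gF α (n + 1)) = 1 := by
  have h1 : (cfA α (n + 1) : ℝ) + gF α (n + 1) = gaussIter α (n + 1) := by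
    rw [cfA, gF]; exact Int.floor_add_fract _
  rw [h1, gauss_succ]
  exact mul_inv_cancel₀ (gF_pos hα n).ne'

lemma FF_zero (α : ℝ) : FF α 0 = 1 := Finset.prod_range_zero _

lemma FF_succ (α : ℝ) (n : ℕ) : FF α (n + 1) = FF α n * gF α n := Finset.prod_range_succ _ _

lemma FF_pos (hα : Irrational α) (n : ℕ) : 0 < FF α n :=
  Finset.prod_pos fun i _ => gF_pos hα i

lemma FF_le_one (hα : Irrational α) (n : ℕ) : FF α n ≤ 1 :=
  Finset.prod_le_one (fun i _ => (gF_pos hα i).le) (fun i _ => (gF_lt_one i).le)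

lemma FF_succ_lt (hα : Irrational α) (n : ℕ) : FF α (n + 1) < FF α n := by
  rw [FF_succ]
  exact mul_lt_of_lt_one_right (FF_pos hα n) (gF_lt_one n)

lemma FF_anti (hα : Irrational α) : StrictAnti (FF α) :=
  strictAnti_nat_of_succ_lt (FF_succ_lt hα)

lemma FF_lt_one (hα : Irrational α) (n : ℕ) : FF α (n + 1) < 1 := by
  have := FF_succ_lt hα n
  have := FF_le_one hα n
  linarith

lemma F_rec (hα : Irrational α) (k : ℕ) :
    (cfA α (k + 1) : ℝ) * FF α (k + 1) + FF α (k + 2) = FF α k := by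
  have h := key_id hα k
  rw [FF_succ α (k + 1), FF_succ α k]
  linear_combination (FF α k) * h

lemma theta (hα : Irrational α) : ∀ n : ℕ,
    (cfQ α n : ℝ) * α - (cfP α n : ℝ) = (-1) ^ (n + 1) * FF α n := by
  intro n
  induction n using Nat.twoStepInduction with
  | zero => simp [cfQ, cfP, FF_zero]
  | one =>
      have : FF α 1 = Int.fract α := by
        rw [FF_succ, FF_zero, one_mul]; rfl
      simp only [cfQ, cfP, this]
      push_cast
      rw [Int.fract]
      ring
  | more n ih1 ih2 =>
      have hF := F_rec hα n
      have h2 : cfQ α (n + 2) = cfA α (n + 1) * cfQ α (n + 1) + cfQ α n := rfl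
      have h2' : cfP α (n + 2) = cfA α (n + 1) * cfP α (n + 1) + cfP α n := rfl
      rw [h2, h2']
      push_cast
      simp only [pow_succ] at *
      linear_combination ((cfA α (n + 1) : ℝ)) * ih2 + ih1 + ((-1 : ℝ) ^ n) * hF

lemma theta' (hα : Irrational α) (n : ℕ) :
    (cfDen α n : ℝ) * α - (cfNum α n : ℝ) = (-1) ^ n * FF α (n + 1) := by
  have h := theta hα (n + 1)
  simp only [pow_succ] at h
  unfold cfDen cfNum
  linear_combination h

lemma xi_eq (hα : Irrational α) (n : ℕ) : cfXi α n = FF α (n + 1) := by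
  rw [cfXi, theta' hα n, abs_mul, abs_pow, abs_neg, abs_one, one_pow, one_mul,
    abs_of_pos (FF_pos hα (n + 1))]

lemma cfQ_one_le (hα : Irrational α) : ∀ n : ℕ, 1 ≤ cfQ α (n + 1) := by
  intro n
  induction n using Nat.twoStepInduction with
  | zero => simp [cfQ]
  | one =>
      have h1 : 1 ≤ cfA α 1 := cfA_one_le hα 0
      show 1 ≤ cfA α 1 * cfQ α 1 + cfQ α 0
      simp only [cfQ]
      omega
  | more n ih1 ih2 =>
      have ha : 1 ≤ cfA α (n + 2) := cfA_one_le hα (n + 1)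
      have ih2' : 1 ≤ cfQ α (n + 2) := ih2
      show 1 ≤ cfA α (n + 2) * cfQ α (n + 2) + cfQ α (n + 1)
      nlinarith

lemma cfQ_nonneg (hα : Irrational α) : ∀ n : ℕ, 0 ≤ cfQ α n
  | 0 => le_refl 0
  | n + 1 => (cfQ_one_le hα n).trans' (by norm_num)

lemma cfDen_one_le (hα : Irrational α) (n : ℕ) : 1 ≤ cfDen α n := cfQ_one_le hα n

lemma cfDen_succ (α : ℝ) (n : ℕ) :
    cfDen α (n + 1) = cfA α (n + 1) * cfDen α n + cfQ α n := rfl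

lemma cfDen_mono (hα : Irrational α) : Monotone (cfDen α) := by
  apply monotone_nat_of_le_succ
  intro n
  have h1 : 1 ≤ cfA α (n + 1) := cfA_one_le hα n
  have h2 := cfDen_one_le hα n
  have h3 := cfQ_nonneg hα n
  rw [cfDen_succ]
  nlinarith

lemma cfDen_add_le (hα : Irrational α) (n : ℕ) :
    cfDen α n + cfDen α (n + 1) ≤ cfDen α (n + 2) := by
  have h1 : 1 ≤ cfA α (n + 2) := cfA_one_le hα (n + 1)
  have h2 : 1 ≤ cfQ α (n + 2) := cfQ_one_le hα (n + 1)
  show cfQ α (n + 1) + cfQ α (n + 2) ≤ cfA α (n + 2) * cfQ α (n + 2) + cfQ α (n + 1)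
  nlinarith

lemma cfDen_ge (hα : Irrational α) : ∀ n : ℕ, (n : ℤ) ≤ cfDen α n := by
  intro n
  induction n with
  | zero => simp [cfDen, cfQ]
  | succ n ih =>
      cases n with
      | zero =>
          have h1 : 1 ≤ cfA α 1 := cfA_one_le hα 0
          show (1 : ℤ) ≤ cfA α 1 * cfQ α 1 + cfQ α 0
          simp only [cfQ]
          omega
      | succ m =>
          have h1 : 1 ≤ cfA α (m + 1 + 1) := cfA_one_le hα (m + 1)
          have h2 : 1 ≤ cfDen α (m + 1) := cfDen_one_le hα (m + 1)
          have h3 : 1 ≤ cfQ α (m + 1) := cfQ_one_le hα m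
          rw [cfDen_succ]
          push_cast
          push_cast at ih
          have h4 : cfDen α (m + 1) ≤ cfA α (m + 1 + 1) * cfDen α (m + 1) :=
            le_mul_of_one_le_left (by linarith) h1
          linarith

lemma det (α : ℝ) : ∀ n : ℕ,
    cfP α (n + 1) * cfQ α n - cfP α n * cfQ α (n + 1) = (-1) ^ (n + 1) := by
  intro n
  induction n with
  | zero => simp [cfP, cfQ]
  | succ n ih =>
      have h2 : cfQ α (n + 2) = cfA α (n + 1) * cfQ α (n + 1) + cfQ α n := rfl
      have h2' : cfP α (n + 2) = cfA α (n + 1) * cfP α (n + 1) + cfP α n := rfl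
      rw [h2, h2']
      simp only [pow_succ] at *
      linear_combination -ih

lemma det' (hα : Irrational α) (n : ℕ) :
    (cfNum α (n + 1) : ℝ) * (cfDen α n : ℝ) - (cfNum α n : ℝ) * (cfDen α (n + 1) : ℝ)
      = (-1) ^ n := by
  have hd := det α (n + 1)
  have := congrArg (fun z : ℤ => (z : ℝ)) hd
  push_cast at this
  unfold cfNum cfDen
  simp only [pow_succ] at this ⊢
  linear_combination this

lemma one_id (hα : Irrational α) (n : ℕ) :
    (cfDen α (n + 1) : ℝ) * FF α (n + 1) + (cfDen α n : ℝ) * FF α (n + 2) = 1 := by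
  have h1 := theta' hα n
  have h2 := theta' hα (n + 1)
  have hd := det' hα n
  have hne : ((-1 : ℝ) ^ n) ≠ 0 := pow_ne_zero _ (by norm_num)
  apply mul_left_cancel₀ hne
  simp only [pow_succ] at h2
  linear_combination (cfDen α n : ℝ) * h2 - (cfDen α (n + 1) : ℝ) * h1 + hd

lemma cfP_one_le {β : ℝ} (hβ : Irrational β) (hβ1 : 1 < β) : ∀ n, 1 ≤ cfP β n := by
  intro n
  induction n using Nat.twoStepInduction with
  | zero => simp [cfP]
  | one =>
      show 1 ≤ ⌊β⌋
      exact Int.le_floor.mpr (by exact_mod_cast hβ1.le)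
  | more n ih1 ih2 =>
      have ha : 1 ≤ cfA β (n + 1) := cfA_one_le hβ n
      show 1 ≤ cfA β (n + 1) * cfP β (n + 1) + cfP β n
      nlinarith

lemma gauss_shift (α : ℝ) : ∀ n, gaussIter α (n + 1) = gaussIter (Int.fract α)⁻¹ n := by
  intro n
  induction n with
  | zero => rfl
  | succ n ih =>
      show (Int.fract (gaussIter α (n + 1)))⁻¹ = _
      rw [ih]
      rfl

lemma cfA_shift (α : ℝ) (n : ℕ) : cfA α (n + 1) = cfA (Int.fract α)⁻¹ n := by
  rw [cfA, cfA, gauss_shift]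

lemma PQ_shift (α : ℝ) : ∀ n : ℕ,
    cfP α (n + 2) = ⌊α⌋ * cfP (Int.fract α)⁻¹ (n + 1) + cfQ (Int.fract α)⁻¹ (n + 1) ∧
    cfQ α (n + 2) = cfP (Int.fract α)⁻¹ (n + 1) := by
  intro n
  induction n using Nat.twoStepInduction with
  | zero =>
      constructor
      · show cfA α 1 * cfP α 1 + cfP α 0 = ⌊α⌋ * cfP (Int.fract α)⁻¹ 1 + cfQ (Int.fract α)⁻¹ 1
        rw [cfA_shift]
        show cfA (Int.fract α)⁻¹ 0 * ⌊α⌋ + 1 = ⌊α⌋ * ⌊(Int.fract α)⁻¹⌋ + 1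
        show ⌊gaussIter (Int.fract α)⁻¹ 0⌋ * ⌊α⌋ + 1 = ⌊α⌋ * ⌊(Int.fract α)⁻¹⌋ + 1
        show ⌊(Int.fract α)⁻¹⌋ * ⌊α⌋ + 1 = ⌊α⌋ * ⌊(Int.fract α)⁻¹⌋ + 1
        ring
      · show cfA α 1 * cfQ α 1 + cfQ α 0 = cfP (Int.fract α)⁻¹ 1
        rw [cfA_shift]
        show cfA (Int.fract α)⁻¹ 0 * 1 + 0 = ⌊(Int.fract α)⁻¹⌋
        show ⌊(Int.fract α)⁻¹⌋ * 1 + 0 = ⌊(Int.fract α)⁻¹⌋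
        ring
  | one =>
      have h0 : cfP α 2 = ⌊α⌋ * cfP (Int.fract α)⁻¹ 1 + cfQ (Int.fract α)⁻¹ 1 ∧
          cfQ α 2 = cfP (Int.fract α)⁻¹ 1 := by
        constructor
        · show cfA α 1 * cfP α 1 + cfP α 0 = _
          rw [cfA_shift]
          show ⌊(Int.fract α)⁻¹⌋ * ⌊α⌋ + 1 = ⌊α⌋ * ⌊(Int.fract α)⁻¹⌋ + 1
          ring
        · show cfA α 1 * cfQ α 1 + cfQ α 0 = _
          rw [cfA_shift]
          show ⌊(Int.fract α)⁻¹⌋ * 1 + 0 = ⌊(Int.fract α)⁻¹⌋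
          ring
      obtain ⟨hP0, hQ0⟩ := h0
      constructor
      · show cfA α 2 * cfP α 2 + cfP α 1 = ⌊α⌋ * cfP (Int.fract α)⁻¹ 2 + cfQ (Int.fract α)⁻¹ 2
        rw [cfA_shift, hP0]
        show cfA (Int.fract α)⁻¹ 1 * (⌊α⌋ * cfP (Int.fract α)⁻¹ 1 + cfQ (Int.fract α)⁻¹ 1) + ⌊α⌋ =
          ⌊α⌋ * (cfA (Int.fract α)⁻¹ 1 * cfP (Int.fract α)⁻¹ 1 + cfP (Int.fract α)⁻¹ 0) +
            (cfA (Int.fract α)⁻¹ 1 * cfQ (Int.fract α)⁻¹ 1 + cfQ (Int.fract α)⁻¹ 0)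
        show cfA (Int.fract α)⁻¹ 1 * (⌊α⌋ * cfP (Int.fract α)⁻¹ 1 + cfQ (Int.fract α)⁻¹ 1) + ⌊α⌋ =
          ⌊α⌋ * (cfA (Int.fract α)⁻¹ 1 * cfP (Int.fract α)⁻¹ 1 + 1) +
            (cfA (Int.fract α)⁻¹ 1 * cfQ (Int.fract α)⁻¹ 1 + 0)
        ring
      · show cfA α 2 * cfQ α 2 + cfQ α 1 = cfP (Int.fract α)⁻¹ 2
        rw [cfA_shift, hQ0]
        show cfA (Int.fract α)⁻¹ 1 * cfP (Int.fract α)⁻¹ 1 + 1 =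
          cfA (Int.fract α)⁻¹ 1 * cfP (Int.fract α)⁻¹ 1 + cfP (Int.fract α)⁻¹ 0
        rfl
  | more n ih1 ih2 =>
      obtain ⟨hP1, hQ1⟩ := ih1
      obtain ⟨hP2, hQ2⟩ := ih2
      have ha : cfA α (n + 3) = cfA (Int.fract α)⁻¹ (n + 2) := cfA_shift α (n + 2)
      constructor
      · show cfA α (n + 3) * cfP α (n + 3) + cfP α (n + 2) = _
        rw [ha, hP1, hP2]
        show _ = ⌊α⌋ * (cfA (Int.fract α)⁻¹ (n + 2) * cfP (Int.fract α)⁻¹ (n + 2) +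
            cfP (Int.fract α)⁻¹ (n + 1)) + (cfA (Int.fract α)⁻¹ (n + 2) *
            cfQ (Int.fract α)⁻¹ (n + 2) + cfQ (Int.fract α)⁻¹ (n + 1))
        ring
      · show cfA α (n + 3) * cfQ α (n + 3) + cfQ α (n + 2) = _
        rw [ha, hQ1, hQ2]
        show _ = cfA (Int.fract α)⁻¹ (n + 2) * cfP (Int.fract α)⁻¹ (n + 2) +
            cfP (Int.fract α)⁻¹ (n + 1)
        ring

lemma conv_eq : ∀ (n : ℕ) {α : ℝ}, Irrational α →
    ((Real.convergent α n : ℚ) : ℝ) = (cfNum α n : ℝ) / (cfDen α n : ℝ)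
  | 0, α, hα => by
      rw [Real.convergent_zero]
      show _ = (cfP α 1 : ℝ) / (cfQ α 1 : ℝ)
      show _ = (⌊α⌋ : ℝ) / ((1 : ℤ) : ℝ)
      push_cast
      ring
  | (n + 1), α, hα => by
      have hα' : Irrational (Int.fract α)⁻¹ := by
        have := gauss_irr hα 1
        rwa [gauss_shift] at this
      have hgt : 1 < (Int.fract α)⁻¹ := by
        have := gauss_gt_one hα 0
        rwa [gauss_shift] at this
      have ih := conv_eq n hα'
      have hp1 : (1 : ℤ) ≤ cfNum (Int.fract α)⁻¹ n := cfP_one_le hα' hgt (n + 1)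
      have hq1 : (1 : ℤ) ≤ cfDen (Int.fract α)⁻¹ n := cfDen_one_le hα' n
      have hp0 : (cfNum (Int.fract α)⁻¹ n : ℝ) ≠ 0 := by
        have : (0:ℝ) < (cfNum (Int.fract α)⁻¹ n : ℝ) := by exact_mod_cast hp1.trans_lt' (by norm_num)
        exact this.ne'
      have hq0 : (cfDen (Int.fract α)⁻¹ n : ℝ) ≠ 0 := by
        have : (0:ℝ) < (cfDen (Int.fract α)⁻¹ n : ℝ) := by exact_mod_cast hq1.trans_lt' (by norm_num)
        exact this.ne'
      have hsh1 : cfNum α (n + 1) = ⌊α⌋ * cfNum (Int.fract α)⁻¹ n + cfDen (Int.fract α)⁻¹ n :=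
        (PQ_shift α n).1
      have hsh2 : cfDen α (n + 1) = cfNum (Int.fract α)⁻¹ n := (PQ_shift α n).2
      rw [Real.convergent_succ]
      push_cast
      rw [ih, hsh1, hsh2]
      push_cast
      rw [inv_div]
      rw [add_div, mul_div_cancel_right₀ _ hp0]

lemma nonconv_lb (hα : Irrational α) {p q : ℤ} (hq : 1 ≤ q)
    (h : ∀ n, (p : ℝ) / (q : ℝ) ≠ (cfNum α n : ℝ) / (cfDen α n : ℝ)) :
    1 / (2 * (q : ℝ)) ≤ |(q : ℝ) * α - (p : ℝ)| := by
  by_contra hlt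
  push_neg at hlt
  set r : ℚ := (p : ℚ) / (q : ℚ) with hr
  have hq0 : (0 : ℝ) < (q : ℝ) := by exact_mod_cast hq.trans_lt' (by norm_num)
  have hrcast : (r : ℝ) = (p : ℝ) / (q : ℝ) := by push_cast [hr]; ring
  have hden : (r.den : ℤ) ≤ q := by
    have hdvd : (r.den : ℤ) ∣ q := by
      rw [hr, ← Rat.divInt_eq_div]
      exact Rat.den_dvd p q
    exact Int.le_of_dvd (by linarith) hdvd
  have hdenpos : (0 : ℝ) < (r.den : ℝ) := by positivity
  have hdenle : (r.den : ℝ) ≤ (q : ℝ) := by exact_mod_cast hden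
  have hrr : |α - (r : ℝ)| < 1 / (2 * (r.den : ℝ) ^ 2) := by
    rw [hrcast]
    have e1 : α - (p : ℝ) / (q : ℝ) = ((q : ℝ) * α - (p : ℝ)) / q := by field_simp
    rw [e1, abs_div, abs_of_pos hq0]
    rw [div_lt_div_iff₀ hq0 (by positivity)]
    have h2 : |(q : ℝ) * α - (p : ℝ)| * (2 * (q:ℝ)) < 1 := by
      rw [← lt_div_iff₀ (by positivity)]
      exact hlt.trans_le (le_refl _)
    calc |(q : ℝ) * α - (p : ℝ)| * (2 * (r.den : ℝ) ^ 2)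
        ≤ |(q : ℝ) * α - (p : ℝ)| * (2 * (q : ℝ) ^ 2) := by
          apply mul_le_mul_of_nonneg_left _ (abs_nonneg _)
          have hsq : (r.den : ℝ) ^ 2 ≤ (q : ℝ) ^ 2 := by nlinarith
          linarith
      _ = (|(q : ℝ) * α - (p : ℝ)| * (2 * (q : ℝ))) * (q : ℝ) := by ring
      _ < 1 * (q : ℝ) := by exact mul_lt_mul_of_pos_right h2 hq0
  obtain ⟨n, hn⟩ := Real.exists_rat_eq_convergent hrr
  apply h n
  rw [← conv_eq n hα, ← hn, hrcast]

lemma cfDen_pos_real (hα : Irrational α) (n : ℕ) : (0 : ℝ) < (cfDen α n : ℝ) := by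
  exact_mod_cast (cfDen_one_le hα n).trans_lt' (by norm_num)

lemma frac_eq (hα : Irrational α) {p q : ℤ} (hq : 0 < q) {m : ℕ}
    (h : (p : ℝ) / (q : ℝ) = (cfNum α m : ℝ) / (cfDen α m : ℝ)) :
    (q : ℝ) * α - (p : ℝ) = ((q : ℝ) / (cfDen α m : ℝ)) * ((-1) ^ m * FF α (m + 1)) := by
  have hdm : (0 : ℝ) < (cfDen α m : ℝ) := cfDen_pos_real hα m
  have hq0 : (0 : ℝ) < (q : ℝ) := by exact_mod_cast hq
  have h' : (p : ℝ) * (cfDen α m : ℝ) = (cfNum α m : ℝ) * (q : ℝ) := by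
    rw [div_eq_div_iff hq0.ne' hdm.ne'] at h
    exact h
  rw [← theta' hα m, div_mul_eq_mul_div, eq_div_iff hdm.ne']
  linear_combination (-1 : ℝ) * h'

lemma frac_core (hα : Irrational α) {p q : ℤ} {k : ℕ} (hq : 0 < q) {c : ℝ} (hc : 0 < c)
    (hθ : (q : ℝ) * α - (p : ℝ) = (-1) ^ k * c) {m : ℕ}
    (h : (p : ℝ) / (q : ℝ) = (cfNum α m : ℝ) / (cfDen α m : ℝ)) :
    Even (k + m) ∧ c * (cfDen α m : ℝ) = (q : ℝ) * FF α (m + 1) := by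
  have hdm : (0 : ℝ) < (cfDen α m : ℝ) := cfDen_pos_real hα m
  have hq0 : (0 : ℝ) < (q : ℝ) := by exact_mod_cast hq
  have hFF : (0 : ℝ) < FF α (m + 1) := FF_pos hα (m + 1)
  have h1 := frac_eq hα hq h
  have h2 : (-1 : ℝ) ^ k * c = ((q : ℝ) / (cfDen α m : ℝ)) * ((-1) ^ m * FF α (m + 1)) := by
    rw [← hθ, h1]
  have hkk : (-1 : ℝ) ^ k * (-1) ^ k = 1 := by
    rw [← pow_add]
    exact Even.neg_one_pow ⟨k, rfl⟩
  have h3 : c * (cfDen α m : ℝ) = (-1) ^ (k + m) * ((q : ℝ) * FF α (m + 1)) := by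
    have h2' : ((-1 : ℝ) ^ k * c) * (cfDen α m : ℝ)
        = ((q : ℝ) * ((-1) ^ m * FF α (m + 1))) := by
      rw [h2, div_mul_eq_mul_div, div_mul_eq_mul_div, mul_div_assoc,
        div_self hdm.ne', mul_one]
    have := congrArg (fun x => (-1 : ℝ) ^ k * x) h2'
    calc c * (cfDen α m : ℝ) = ((-1 : ℝ) ^ k * (-1) ^ k) * (c * (cfDen α m : ℝ)) := by
          rw [hkk, one_mul]
      _ = (-1 : ℝ) ^ k * (((-1 : ℝ) ^ k * c) * (cfDen α m : ℝ)) := by ring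
      _ = (-1 : ℝ) ^ k * ((q : ℝ) * ((-1) ^ m * FF α (m + 1))) := by rw [h2']
      _ = (-1 : ℝ) ^ (k + m) * ((q : ℝ) * FF α (m + 1)) := by rw [pow_add]; ring
  rcases Nat.even_or_odd (k + m) with he | ho
  · refine ⟨he, ?_⟩
    rw [he.neg_one_pow, one_mul] at h3
    exact h3
  · exfalso
    rw [ho.neg_one_pow] at h3
    nlinarith [mul_pos hc hdm, mul_pos hq0 hFF]

lemma pair2_theta (hα : Irrational α) (n : ℕ) :
    ((cfDen α (n + 2) + cfDen α n : ℤ) : ℝ) * α - ((cfNum α (n + 2) + cfNum α n : ℤ) : ℝ)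
      = (-1) ^ n * (FF α (n + 3) + FF α (n + 1)) := by
  have h1 := theta' hα n
  have h2 := theta' hα (n + 2)
  push_cast
  simp only [pow_succ] at h2
  linear_combination h1 + h2

lemma pair1_theta (hα : Irrational α) (n : ℕ) :
    ((cfDen α (n + 1) + cfDen α n : ℤ) : ℝ) * α - ((cfNum α (n + 1) + cfNum α n : ℤ) : ℝ)
      = (-1) ^ n * (FF α (n + 1) - FF α (n + 2)) := by
  have h1 := theta' hα n
  have h2 := theta' hα (n + 1)
  push_cast
  simp only [pow_succ] at h2
  linear_combination h1 + h2

lemma even_contra {n m : ℕ} (h : Even (n + m)) (h2 : m = n + 1 ∨ m = n + 3) : False := by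
  rcases h with ⟨r, hr⟩
  omega

lemma cfDen_succ' (α : ℝ) (n : ℕ) :
    cfDen α (n + 1) = cfA α (n + 1) * cfDen α n + cfQ α n := rfl

lemma cfDen_two (α : ℝ) (n : ℕ) :
    cfDen α (n + 2) = cfA α (n + 2) * cfDen α (n + 1) + cfDen α n := rfl

/-- The pair `(p_{n+2}+p_n, q_{n+2}+q_n)` is never a convergent fraction. -/
lemma pair2_not (hα : Irrational α) (n m : ℕ) :
    ((cfNum α (n + 2) + cfNum α n : ℤ) : ℝ) / ((cfDen α (n + 2) + cfDen α n : ℤ) : ℝ)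
      ≠ (cfNum α m : ℝ) / (cfDen α m : ℝ) := by
  intro h
  have hQ : 0 < cfDen α (n + 2) + cfDen α n := by
    have := cfDen_one_le hα (n + 2); have := cfDen_one_le hα n; omega
  have hc : 0 < FF α (n + 3) + FF α (n + 1) := by
    have := FF_pos hα (n + 3); have := FF_pos hα (n + 1); linarith
  obtain ⟨hev, heq⟩ := frac_core hα hQ hc (pair2_theta hα n) h
  set c := FF α (n + 3) + FF α (n + 1) with hcdef
  have hdm : (0 : ℝ) < (cfDen α m : ℝ) := cfDen_pos_real hα m
  have hQR : ((cfDen α (n + 2) + cfDen α n : ℤ) : ℝ)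
      = (cfDen α (n + 2) : ℝ) + (cfDen α n : ℝ) := by push_cast; ring
  rw [hQR] at heq
  have hF31 : FF α (n + 3) < FF α (n + 1) := FF_anti hα (by omega)
  rcases (by omega : m ≤ n ∨ m = n + 1 ∨ m = n + 2 ∨ m = n + 3 ∨ n + 4 ≤ m) with
    hm | hm | hm | hm | hm
  · -- m ≤ n : c ≥ 2 FF(n+1), but c < 2 FF(n+1)
    have hd1 : (cfDen α m : ℝ) ≤ (cfDen α n : ℝ) := by
      exact_mod_cast cfDen_mono hα hm
    have hd2 : (cfDen α n : ℝ) ≤ (cfDen α (n + 2) : ℝ) := by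
      exact_mod_cast cfDen_mono hα (by omega : n ≤ n + 2)
    have hFm : FF α (n + 1) ≤ FF α (m + 1) := (FF_anti hα).antitone (by omega)
    have hFmpos : (0 : ℝ) < FF α (m + 1) := FF_pos hα (m + 1)
    nlinarith [heq, mul_pos hdm hFmpos]
  · exact even_contra hev (Or.inl hm)
  · subst hm
    have hxd : (cfDen α (n + 2) : ℝ) + (cfDen α n : ℝ) ≤ 2 * (cfDen α (n + 2) : ℝ) := by
      have : (cfDen α n : ℝ) ≤ (cfDen α (n + 2) : ℝ) := by
        exact_mod_cast cfDen_mono hα (by omega : n ≤ n + 2)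
      linarith
    have hFpos : (0 : ℝ) < FF α (n + 3) := FF_pos hα (n + 3)
    nlinarith [heq]
  · exact even_contra hev (Or.inr hm)
  · -- m ≥ n + 4
    have hQle : (cfDen α (n + 2) : ℝ) + (cfDen α n : ℝ) ≤ (cfDen α m : ℝ) := by
      have h1 : cfDen α n + cfDen α (n + 3) ≤ cfDen α (n + 4) := by
        have ha1 : cfDen α (n + 2) + cfDen α (n + 3) ≤ cfDen α (n + 4) := cfDen_add_le hα (n + 2)
        have ha2 : cfDen α n ≤ cfDen α (n + 2) := cfDen_mono hα (by omega : n ≤ n + 2)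
        omega
      have h2 : cfDen α (n + 2) ≤ cfDen α (n + 3) := cfDen_mono hα (by omega)
      have h3 : cfDen α (n + 4) ≤ cfDen α m := cfDen_mono hα (by omega)
      exact_mod_cast by omega
    have hFm : FF α (m + 1) < FF α (n + 3) := FF_anti hα (by omega)
    have hFmpos : (0 : ℝ) < FF α (m + 1) := FF_pos hα (m + 1)
    have hFpos : (0 : ℝ) < FF α (n + 1) := FF_pos hα (n + 1)
    nlinarith [heq]

/-- If `a_{n+2} ≥ 2`, the mediant `(p_{n+1}+p_n, q_{n+1}+q_n)` is never a convergent
fraction. -/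
lemma pair1_not (hα : Irrational α) (n : ℕ) (ha : 2 ≤ cfA α (n + 2)) (m : ℕ) :
    ((cfNum α (n + 1) + cfNum α n : ℤ) : ℝ) / ((cfDen α (n + 1) + cfDen α n : ℤ) : ℝ)
      ≠ (cfNum α m : ℝ) / (cfDen α m : ℝ) := by
  intro h
  have hQ : 0 < cfDen α (n + 1) + cfDen α n := by
    have := cfDen_one_le hα (n + 1); have := cfDen_one_le hα n; omega
  have hc : 0 < FF α (n + 1) - FF α (n + 2) := by
    have := FF_succ_lt hα (n + 1); linarith
  obtain ⟨hev, heq⟩ := frac_core hα hQ hc (pair1_theta hα n) h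
  have hdm : (0 : ℝ) < (cfDen α m : ℝ) := cfDen_pos_real hα m
  have hQR : ((cfDen α (n + 1) + cfDen α n : ℤ) : ℝ)
      = (cfDen α (n + 1) : ℝ) + (cfDen α n : ℝ) := by push_cast; ring
  rw [hQR] at heq
  -- c ≥ FF(n+2) + FF(n+3)
  have hrec := F_rec hα (n + 1)
  have hclow : FF α (n + 2) + FF α (n + 3) ≤ FF α (n + 1) - FF α (n + 2) := by
    have haR : (2 : ℝ) ≤ (cfA α (n + 2) : ℝ) := by exact_mod_cast ha
    have hF2 : (0 : ℝ) < FF α (n + 2) := FF_pos hα (n + 2)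
    nlinarith [hrec]
  have hF23 : (0 : ℝ) < FF α (n + 3) := FF_pos hα (n + 3)
  have hF2p : (0 : ℝ) < FF α (n + 2) := FF_pos hα (n + 2)
  rcases (by omega : m ≤ n ∨ m = n + 1 ∨ m = n + 2 ∨ m = n + 3 ∨ n + 4 ≤ m) with
    hm | hm | hm | hm | hm
  · -- m ≤ n : c ≥ FF(m+1) ≥ FF(n+1) > c
    have hd1 : (cfDen α m : ℝ) ≤ (cfDen α (n + 1) : ℝ) + (cfDen α n : ℝ) := by
      have h1 : cfDen α m ≤ cfDen α n := cfDen_mono hα hm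
      have h2 := cfDen_one_le hα (n + 1)
      exact_mod_cast by omega
    have hFm : FF α (n + 1) ≤ FF α (m + 1) := (FF_anti hα).antitone (by omega)
    have hFmpos : (0 : ℝ) < FF α (m + 1) := FF_pos hα (m + 1)
    nlinarith [heq]
  · exact even_contra hev (Or.inl hm)
  · subst hm
    -- q_{n+2} > Q
    have hd : (cfDen α (n + 1) : ℝ) + (cfDen α n : ℝ) < (cfDen α (n + 2) : ℝ) := by
      have h1 : cfDen α (n + 2) = cfA α (n + 2) * cfDen α (n + 1) + cfDen α n :=
        cfDen_two α n
      have h2 := cfDen_one_le hα (n + 1)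
      have h3 := cfDen_one_le hα n
      have : cfDen α (n + 1) + cfDen α n < cfDen α (n + 2) := by nlinarith
      exact_mod_cast this
    nlinarith [heq]
  · exact even_contra hev (Or.inr hm)
  · -- m ≥ n + 4
    have hQle : (cfDen α (n + 1) : ℝ) + (cfDen α n : ℝ) ≤ (cfDen α m : ℝ) := by
      have h1 : cfDen α (n + 1) + cfDen α (n + 2) ≤ cfDen α (n + 3) := cfDen_add_le hα (n + 1)
      have h2 : cfDen α n ≤ cfDen α (n + 2) := cfDen_mono hα (by omega)
      have h3 : cfDen α (n + 3) ≤ cfDen α m := cfDen_mono hα (by omega)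
      exact_mod_cast by omega
    have hFm : FF α (m + 1) < FF α (n + 3) := FF_anti hα (by omega)
    have hFmpos : (0 : ℝ) < FF α (m + 1) := FF_pos hα (m + 1)
    nlinarith [heq]

/-- value bound for the mediant pair -/
lemma val1 (hα : Irrational α) (n : ℕ) :
    ((cfDen α (n + 1) + cfDen α n : ℤ) : ℝ) * (FF α (n + 1) - FF α (n + 2)) ≤ 2 := by
  have h1 := one_id hα n
  have hd : (cfDen α n : ℝ) ≤ (cfDen α (n + 1) : ℝ) := by
    exact_mod_cast cfDen_mono hα (by omega : n ≤ n + 1)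
  have hd0 := cfDen_pos_real hα n
  have hd1 := cfDen_pos_real hα (n + 1)
  have hF1 : (0 : ℝ) < FF α (n + 1) := FF_pos hα (n + 1)
  have hF2 : (0 : ℝ) < FF α (n + 2) := FF_pos hα (n + 2)
  have hlt := FF_succ_lt hα (n + 1)
  push_cast
  nlinarith

/-- value bound for the second pair, assuming `a_{n+2} = 1` -/
lemma val2 (hα : Irrational α) (n : ℕ) (ha : cfA α (n + 2) = 1) :
    ((cfDen α (n + 2) + cfDen α n : ℤ) : ℝ) * (FF α (n + 3) + FF α (n + 1)) ≤ 8 := by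
  have h1 := one_id hα n
  have hd2 : cfDen α (n + 2) = cfDen α (n + 1) + cfDen α n := by
    rw [cfDen_two, ha, one_mul]
  have hd : (cfDen α n : ℝ) ≤ (cfDen α (n + 1) : ℝ) := by
    exact_mod_cast cfDen_mono hα (by omega : n ≤ n + 1)
  have hd0 := cfDen_pos_real hα n
  have hd1 := cfDen_pos_real hα (n + 1)
  have hF1 : (0 : ℝ) < FF α (n + 1) := FF_pos hα (n + 1)
  have hF2 : (0 : ℝ) < FF α (n + 2) := FF_pos hα (n + 2)
  have hF3 : FF α (n + 3) < FF α (n + 1) := FF_anti hα (by omega)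
  have hF3p : (0 : ℝ) < FF α (n + 3) := FF_pos hα (n + 3)
  rw [hd2]
  push_cast
  nlinarith

lemma psi2s_set_bddBelow (α t : ℝ) :
    BddBelow {x : ℝ | ∃ p q : ℤ, 1 ≤ q ∧ (q : ℝ) ≤ t ∧
      (∀ n : ℕ, (p : ℝ) / (q : ℝ) ≠ (cfNum α n : ℝ) / (cfDen α n : ℝ)) ∧
      x = |(q : ℝ) * α - (p : ℝ)|} := by
  refine ⟨0, ?_⟩
  rintro x ⟨p, q, _, _, _, rfl⟩
  exact abs_nonneg _

lemma psi2s_le (α : ℝ) {p q : ℤ} {t : ℝ} (hq : 1 ≤ q) (hqt : (q : ℝ) ≤ t)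
    (hne : ∀ n : ℕ, (p : ℝ) / (q : ℝ) ≠ (cfNum α n : ℝ) / (cfDen α n : ℝ)) :
    psi2sFn α t ≤ |(q : ℝ) * α - (p : ℝ)| :=
  csInf_le (psi2s_set_bddBelow α t) ⟨p, q, hq, hqt, hne, rfl⟩

lemma psi2s_set_nonempty (hα : Irrational α) {t : ℝ} (ht : 1 ≤ t) :
    Set.Nonempty {x : ℝ | ∃ p q : ℤ, 1 ≤ q ∧ (q : ℝ) ≤ t ∧
      (∀ n : ℕ, (p : ℝ) / (q : ℝ) ≠ (cfNum α n : ℝ) / (cfDen α n : ℝ)) ∧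
      x = |(q : ℝ) * α - (p : ℝ)|} := by
  refine ⟨|(1 : ℝ) * α - ((⌊α⌋ + 2 : ℤ) : ℝ)|, ⌊α⌋ + 2, 1, le_refl 1, by exact_mod_cast ht, ?_, by norm_num⟩
  intro n h
  have h1 := frac_eq hα one_pos (p := ⌊α⌋ + 2) (by exact_mod_cast h)
  have hfr : ((1 : ℤ) : ℝ) * α - ((⌊α⌋ + 2 : ℤ) : ℝ) = Int.fract α - 2 := by
    rw [Int.fract]; push_cast; ring
  have hDen := cfDen_pos_real hα n
  have hDen1 : (1 : ℝ) ≤ (cfDen α n : ℝ) := by exact_mod_cast cfDen_one_le hα n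
  have hFF : (0 : ℝ) < FF α (n + 1) := FF_pos hα (n + 1)
  have hFF1 : FF α (n + 1) < 1 := FF_lt_one hα n
  have habs := congrArg abs h1
  rw [hfr] at habs
  have hL : |Int.fract α - 2| = 2 - Int.fract α := by
    rw [abs_of_neg (by linarith [Int.fract_lt_one α])]
    ring
  have hR : |((1 : ℤ) : ℝ) / (cfDen α n : ℝ) * ((-1) ^ n * FF α (n + 1))|
      = (1 / (cfDen α n : ℝ)) * FF α (n + 1) := by
    rw [abs_mul, abs_mul, abs_pow, abs_neg, abs_one, one_pow, one_mul,
      abs_of_pos hFF, abs_of_pos (by positivity : (0:ℝ) < ((1:ℤ):ℝ) / (cfDen α n : ℝ))]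
    push_cast
    ring
  rw [hL, hR] at habs
  have hR2 : (1 / (cfDen α n : ℝ)) * FF α (n + 1) ≤ FF α (n + 1) := by
    apply mul_le_of_le_one_left hFF.le
    rw [div_le_one hDen]
    exact hDen1
  have := Int.fract_lt_one α
  linarith

lemma psi2s_lb (hα : Irrational α) {t : ℝ} (ht : 1 ≤ t) :
    1 / (2 * t) ≤ psi2sFn α t := by
  apply le_csInf (psi2s_set_nonempty hα ht)
  rintro x ⟨p, q, hq, hqt, hne, rfl⟩
  have h := nonconv_lb hα hq hne
  have hq0 : (0 : ℝ) < (q : ℝ) := by exact_mod_cast hq.trans_lt' (by norm_num)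
  have ht0 : (0 : ℝ) < t := by linarith
  have : 1 / (2 * t) ≤ 1 / (2 * (q : ℝ)) := by
    apply one_div_le_one_div_of_le (by positivity)
    linarith
  linarith

lemma part1_pointwise (hα : Irrational α) {t : ℝ} (ht : 1 ≤ t) :
    1 / 2 ≤ t * psi2sFn α t := by
  have h := psi2s_lb hα ht
  have ht0 : (0 : ℝ) < t := by linarith
  calc (1 : ℝ) / 2 = t * (1 / (2 * t)) := by field_simp
    _ ≤ t * psi2sFn α t := mul_le_mul_of_nonneg_left h ht0.le

lemma abs_signed {c : ℝ} (hc : 0 ≤ c) (n : ℕ) : |(-1 : ℝ) ^ n * c| = c := by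
  rw [abs_mul, abs_pow, abs_neg, abs_one, one_pow, one_mul, abs_of_nonneg hc]

lemma exists_good_pair (hα : Irrational α) (n : ℕ) :
    ∃ p q : ℤ, cfDen α n ≤ q ∧ 1 ≤ q ∧
      (∀ m : ℕ, (p : ℝ) / (q : ℝ) ≠ (cfNum α m : ℝ) / (cfDen α m : ℝ)) ∧
      (q : ℝ) * |(q : ℝ) * α - (p : ℝ)| ≤ 8 := by
  have ha1 : 1 ≤ cfA α (n + 2) := cfA_one_le hα (n + 1)
  have hDn := cfDen_one_le hα n
  rcases eq_or_lt_of_le ha1 with ha | ha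
  · -- a_{n+2} = 1 : use pair2
    refine ⟨cfNum α (n + 2) + cfNum α n, cfDen α (n + 2) + cfDen α n, ?_, ?_, ?_, ?_⟩
    · have := cfDen_one_le hα (n + 2); omega
    · have := cfDen_one_le hα (n + 2); omega
    · exact pair2_not hα n
    · have hθ := pair2_theta hα n
      rw [hθ]
      have hc : 0 ≤ FF α (n + 3) + FF α (n + 1) := by
        have := FF_pos hα (n + 3); have := FF_pos hα (n + 1); linarith
      rw [abs_signed hc]
      have hv := val2 hα n ha.symm
      have hQ0 : (0 : ℝ) ≤ ((cfDen α (n + 2) + cfDen α n : ℤ) : ℝ) := by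
        have := cfDen_one_le hα (n + 2); exact_mod_cast by omega
      exact hv
  · -- a_{n+2} ≥ 2 : use pair1
    refine ⟨cfNum α (n + 1) + cfNum α n, cfDen α (n + 1) + cfDen α n, ?_, ?_, ?_, ?_⟩
    · have := cfDen_one_le hα (n + 1); omega
    · have := cfDen_one_le hα (n + 1); omega
    · exact pair1_not hα n ha
    · have hθ := pair1_theta hα n
      rw [hθ]
      have hc : 0 ≤ FF α (n + 1) - FF α (n + 2) := by
        have := FF_succ_lt hα (n + 1); linarith
      rw [abs_signed hc]
      have hv := val1 hα n
      linarith

lemma freq (hα : Irrational α) (N : ℝ) :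
    ∃ t : ℝ, N ≤ t ∧ 1 ≤ t ∧ t * psi2sFn α t ≤ 8 := by
  obtain ⟨n, hn⟩ := exists_nat_ge N
  obtain ⟨p, q, hq1, hq2, hne, hval⟩ := exists_good_pair hα n
  refine ⟨(q : ℝ), ?_, by exact_mod_cast hq2, ?_⟩
  · have h1 : (n : ℤ) ≤ cfDen α n := cfDen_ge hα n
    have : (n : ℤ) ≤ q := h1.trans hq1
    have : (n : ℝ) ≤ (q : ℝ) := by exact_mod_cast this
    linarith
  · have hq0 : (0 : ℝ) ≤ (q : ℝ) := by exact_mod_cast hq2.trans' (by norm_num)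
    have hle := psi2s_le α hq2 (le_refl (q : ℝ)) hne
    calc (q : ℝ) * psi2sFn α (q : ℝ) ≤ (q : ℝ) * |(q : ℝ) * α - (p : ℝ)| :=
          mul_le_mul_of_nonneg_left hle hq0
      _ ≤ 8 := hval

lemma half_mem_liminf_set (hα : Irrational α) :
    (1 : ℝ) / 2 ∈ {a : ℝ | ∀ᶠ t in Filter.atTop, a ≤ t * psi2sFn α t} := by
  filter_upwards [Filter.eventually_ge_atTop (1 : ℝ)] with t ht
  exact part1_pointwise hα ht

lemma liminf_set_bddAbove (hα : Irrational α) :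
    BddAbove {a : ℝ | ∀ᶠ t in Filter.atTop, a ≤ t * psi2sFn α t} := by
  refine ⟨8, ?_⟩
  rintro a (ha : ∀ᶠ t in Filter.atTop, a ≤ t * psi2sFn α t)
  rw [Filter.eventually_atTop] at ha
  obtain ⟨T, hT⟩ := ha
  obtain ⟨t, ht1, _, ht3⟩ := freq hα T
  exact (hT t ht1).trans ht3

lemma ksOf_ge_half (hα : Irrational α) : (1 : ℝ) / 2 ≤ ksOf α := by
  rw [ksOf, Filter.liminf_eq]
  exact le_csSup (liminf_set_bddAbove hα) (half_mem_liminf_set hα)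

lemma ksOf_eq_half (hα : Irrational α)
    (hup : ∀ ε : ℝ, 0 < ε → ∀ N : ℝ, ∃ t : ℝ, N ≤ t ∧ 1 ≤ t ∧ t * psi2sFn α t ≤ 1 / 2 + ε) :
    ksOf α = 1 / 2 := by
  refine le_antisymm ?_ (ksOf_ge_half hα)
  rw [ksOf, Filter.liminf_eq]
  apply csSup_le ⟨1 / 2, half_mem_liminf_set hα⟩
  rintro a (ha : ∀ᶠ t in Filter.atTop, a ≤ t * psi2sFn α t)
  rw [Filter.eventually_atTop] at ha
  obtain ⟨T, hT⟩ := ha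
  refine le_of_forall_pos_le_add ?_
  intro ε hε
  obtain ⟨t, ht1, _, ht3⟩ := hup ε hε T
  exact (hT t ht1).trans ht3

set_option maxHeartbeats 1000000 in
/-- precise value bound for the mediant pair when `a_{n+2} = 2` and neighbours are ≥ M -/
lemma val1_precise (hα : Irrational α) (n : ℕ) {M : ℝ} (hM : 1 ≤ M)
    (ha : cfA α (n + 2) = 2) (hA1 : M ≤ (cfA α (n + 1) : ℝ)) (hA3 : M ≤ (cfA α (n + 3) : ℝ)) :
    ((cfDen α (n + 1) + cfDen α n : ℤ) : ℝ) * (FF α (n + 1) - FF α (n + 2))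
      ≤ (M + 1) ^ 2 / (2 * M ^ 2) := by
  set D0 : ℝ := (cfDen α n : ℝ) with hD0
  set D1 : ℝ := (cfDen α (n + 1) : ℝ) with hD1
  set D2 : ℝ := (cfDen α (n + 2) : ℝ) with hD2
  set F2 : ℝ := FF α (n + 2) with hF2def
  set f : ℝ := gF α (n + 2) with hfdef
  have hD0pos : 0 < D0 := cfDen_pos_real hα n
  have hD1pos : 0 < D1 := cfDen_pos_real hα (n + 1)
  have hF2pos : 0 < F2 := FF_pos hα (n + 2)
  have hfpos : 0 < f := gF_pos hα (n + 2)
  -- FF (n+3) = F2 * f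
  have hF3 : FF α (n + 3) = F2 * f := FF_succ α (n + 2)
  -- c = (1 + f) * F2
  have hrec := F_rec hα (n + 1)
  rw [ha] at hrec
  have hc : FF α (n + 1) - FF α (n + 2) = (1 + f) * F2 := by
    push_cast at hrec
    rw [hF3] at hrec
    linarith [hrec]
  -- 1 = F2 * (D2 + D1 * f)
  have hone := one_id hα (n + 1)
  rw [hF3] at hone
  have hX : F2 * (D2 + D1 * f) = 1 := by
    rw [hD2, hD1]
    linarith [hone]
  -- D2 = 2 D1 + D0
  have hD2eq : D2 = 2 * D1 + D0 := by
    have := cfDen_two α n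
    rw [ha] at this
    rw [hD2, hD1, hD0]
    exact_mod_cast this
  -- M * D0 ≤ D1
  have hMD0 : M * D0 ≤ D1 := by
    have h1 : cfA α (n + 1) * cfDen α n ≤ cfDen α (n + 1) := by
      have := cfDen_succ' α n
      have hq := cfQ_nonneg hα n
      omega
    have h1' : (cfA α (n + 1) : ℝ) * D0 ≤ D1 := by rw [hD0, hD1]; exact_mod_cast h1
    nlinarith
  -- f * M ≤ 1
  have hfM : f * M ≤ 1 := by
    have hx : (cfA α (n + 3) : ℝ) ≤ gaussIter α (n + 3) := Int.floor_le _
    have hinv : f * gaussIter α (n + 3) = 1 := by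
      rw [gauss_succ]
      exact mul_inv_cancel₀ hfpos.ne'
    nlinarith
  have hMpos : 0 < M := by linarith
  -- main inequality : M^2 * ((D1 + D0) * (1 + f)) ≤ (M+1)^2 * D1
  have hmain : M ^ 2 * ((D1 + D0) * (1 + f)) ≤ (M + 1) ^ 2 * D1 := by
    have e1 : M ^ 2 * D0 ≤ M * D1 := by nlinarith [mul_le_mul_of_nonneg_left hMD0 hMpos.le]
    have e2 : M ^ 2 * (f * D1) ≤ M * D1 := by
      nlinarith [mul_le_mul_of_nonneg_left hfM (by positivity : (0:ℝ) ≤ M * D1)]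
    have e3 : M ^ 2 * (f * D0) ≤ D1 := by
      nlinarith [mul_le_mul hfM hMD0 (by positivity) (by norm_num : (0:ℝ) ≤ 1)]
    nlinarith
  have hQcast : ((cfDen α (n + 1) + cfDen α n : ℤ) : ℝ) = D1 + D0 := by
    rw [hD1, hD0]; push_cast; ring
  rw [hQcast, hc, le_div_iff₀ (by positivity : (0:ℝ) < 2 * M ^ 2)]
  calc (D1 + D0) * ((1 + f) * F2) * (2 * M ^ 2)
      = (2 * F2) * (M ^ 2 * ((D1 + D0) * (1 + f))) := by ring
    _ ≤ (2 * F2) * ((M + 1) ^ 2 * D1) := by nlinarith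
    _ = (M + 1) ^ 2 * (F2 * (2 * D1)) := by ring
    _ ≤ (M + 1) ^ 2 * (F2 * (D2 + D1 * f)) := by
        have h2d : 2 * D1 ≤ D2 + D1 * f := by nlinarith
        nlinarith [mul_le_mul_of_nonneg_left h2d
          (by positivity : (0:ℝ) ≤ (M + 1) ^ 2 * F2)]
    _ = (M + 1) ^ 2 := by rw [hX]; ring

/-- prescribed partial quotients: `2` at even indices, large at odd indices -/
def bA (n : ℕ) : ℤ := if n % 2 = 1 then (n : ℤ) + 2 else 2

lemma bA_ge_two (n : ℕ) : 2 ≤ bA n := by unfold bA; split <;> omega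

/-- finite continued fraction tails -/
noncomputable def sFn : ℕ → ℕ → ℝ
  | 0, k => (bA k : ℝ)
  | m + 1, k => (bA k : ℝ) + (sFn m (k + 1))⁻¹

lemma sFn_ge_two : ∀ m k, (2 : ℝ) ≤ sFn m k
  | 0, k => by
      show (2 : ℝ) ≤ (bA k : ℝ)
      exact_mod_cast bA_ge_two k
  | m + 1, k => by
      have h := sFn_ge_two m (k + 1)
      have hb : (2 : ℝ) ≤ (bA k : ℝ) := by exact_mod_cast bA_ge_two k
      have hp : 0 < (sFn m (k + 1))⁻¹ := inv_pos.mpr (by linarith)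
      show (2 : ℝ) ≤ (bA k : ℝ) + (sFn m (k + 1))⁻¹
      linarith

lemma sFn_pos (m k : ℕ) : 0 < sFn m k := lt_of_lt_of_le two_pos (sFn_ge_two m k)

lemma sFn_inv_le (m k : ℕ) : (sFn m k)⁻¹ ≤ 1 / 2 := by
  have h := sFn_ge_two m k
  rw [inv_le_comm₀ (sFn_pos m k) (by norm_num)]
  linarith

lemma sFn_le (m k : ℕ) : sFn m k ≤ (bA k : ℝ) + 1 / 2 := by
  cases m with
  | zero => show (bA k : ℝ) ≤ _; linarith
  | succ m =>
      have := sFn_inv_le m (k + 1)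
      show (bA k : ℝ) + (sFn m (k + 1))⁻¹ ≤ _
      linarith

lemma sFn_diff : ∀ m k, |sFn (m + 1) k - sFn m k| ≤ (1 / 4 : ℝ) ^ m
  | 0, k => by
      show |((bA k : ℝ) + (sFn 0 (k + 1))⁻¹) - (bA k : ℝ)| ≤ _
      rw [add_sub_cancel_left, pow_zero,
        abs_of_pos (inv_pos.mpr (sFn_pos 0 (k + 1)))]
      have := sFn_inv_le 0 (k + 1)
      linarith
  | m + 1, k => by
      have ih := sFn_diff m (k + 1)
      have hx : 2 ≤ sFn (m + 1) (k + 1) := sFn_ge_two _ _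
      have hy : 2 ≤ sFn m (k + 1) := sFn_ge_two _ _
      have hx0 : (0:ℝ) < sFn (m + 1) (k + 1) := by linarith
      have hy0 : (0:ℝ) < sFn m (k + 1) := by linarith
      show |((bA k : ℝ) + (sFn (m + 1) (k + 1))⁻¹) - ((bA k : ℝ) + (sFn m (k + 1))⁻¹)| ≤ _
      have he : ((bA k : ℝ) + (sFn (m + 1) (k + 1))⁻¹) - ((bA k : ℝ) + (sFn m (k + 1))⁻¹)
          = (sFn m (k + 1) - sFn (m + 1) (k + 1)) / (sFn (m + 1) (k + 1) * sFn m (k + 1)) := by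
        field_simp
        ring
      rw [he, abs_div, abs_of_pos (mul_pos hx0 hy0)]
      have hnum : |sFn m (k + 1) - sFn (m + 1) (k + 1)| ≤ (1 / 4 : ℝ) ^ m := by
        rw [abs_sub_comm]; exact ih
      have hden : (4 : ℝ) ≤ sFn (m + 1) (k + 1) * sFn m (k + 1) := by nlinarith
      calc |sFn m (k + 1) - sFn (m + 1) (k + 1)| / (sFn (m + 1) (k + 1) * sFn m (k + 1))
          ≤ (1 / 4 : ℝ) ^ m / 4 := by
            apply div_le_div₀ (by positivity) hnum (by norm_num) hden
        _ = (1 / 4 : ℝ) ^ (m + 1) := by rw [pow_succ]; ring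

lemma sFn_cauchy (k : ℕ) : CauchySeq (fun m => sFn m k) := by
  apply cauchySeq_of_le_geometric (1 / 4 : ℝ) 1 (by norm_num)
  intro n
  rw [Real.dist_eq, abs_sub_comm, one_mul]
  exact sFn_diff n k

/-- the tails of our number -/
noncomputable def tF (k : ℕ) : ℝ := limUnder Filter.atTop (fun m => sFn m k)

lemma tF_tendsto (k : ℕ) : Filter.Tendsto (fun m => sFn m k) Filter.atTop (nhds (tF k)) :=
  (sFn_cauchy k).tendsto_limUnder

lemma tF_ge_two (k : ℕ) : 2 ≤ tF k := ge_of_tendsto' (tF_tendsto k) fun m => sFn_ge_two m k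

lemma tF_le (k : ℕ) : tF k ≤ (bA k : ℝ) + 1 / 2 :=
  le_of_tendsto' (tF_tendsto k) fun m => sFn_le m k

lemma tF_pos (k : ℕ) : 0 < tF k := lt_of_lt_of_le two_pos (tF_ge_two k)

lemma tF_rec (k : ℕ) : tF k = (bA k : ℝ) + (tF (k + 1))⁻¹ := by
  have h1 : Filter.Tendsto (fun m => sFn (m + 1) k) Filter.atTop (nhds (tF k)) :=
    (tF_tendsto k).comp (Filter.tendsto_add_atTop_nat 1)
  have h2 : Filter.Tendsto (fun m => (bA k : ℝ) + (sFn m (k + 1))⁻¹) Filter.atTop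
      (nhds ((bA k : ℝ) + (tF (k + 1))⁻¹)) :=
    tendsto_const_nhds.add ((tF_tendsto (k + 1)).inv₀ (tF_pos (k + 1)).ne')
  exact tendsto_nhds_unique h1 h2

lemma tF_floor (k : ℕ) : ⌊tF k⌋ = bA k := by
  rw [Int.floor_eq_iff]
  constructor
  · have h := tF_rec k
    have : 0 < (tF (k + 1))⁻¹ := inv_pos.mpr (tF_pos (k + 1))
    linarith
  · have h := tF_le k
    push_cast
    linarith

lemma tF_fract (k : ℕ) : Int.fract (tF k) = (tF (k + 1))⁻¹ := by
  rw [Int.fract, tF_floor]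
  have := tF_rec k
  linarith

lemma gauss_tF : ∀ n, gaussIter (tF 0) n = tF n
  | 0 => rfl
  | n + 1 => by
      show (Int.fract (gaussIter (tF 0) n))⁻¹ = _
      rw [gauss_tF n, tF_fract, inv_inv]

lemma cfA_tF (n : ℕ) : cfA (tF 0) n = bA n := by rw [cfA, gauss_tF, tF_floor]

lemma no_strictAnti (f : ℕ → ℕ) (h : ∀ n, f (n + 1) < f n) : False := by
  have key : ∀ n, f n + n ≤ f 0 := by
    intro n
    induction n with
    | zero => omega
    | succ n ih => have := h n; omega
  have := key (f 0 + 1)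
  omega

lemma den_add_int (q : ℚ) (z : ℤ) : (q + (z : ℚ)).den ∣ q.den := by
  have h : q + (z : ℚ) = Rat.divInt (q.num + z * q.den) q.den := by
    rw [Rat.divInt_eq_div]
    push_cast
    rw [add_div]
    rw [Rat.num_div_den]
    congr 1
    rw [mul_div_assoc, div_self (by exact_mod_cast q.den_nz : ((q.den : ℚ)) ≠ 0), mul_one]
  rw [h]
  have := Rat.den_dvd (q.num + z * q.den) (q.den : ℤ)
  exact_mod_cast this

lemma rat_descent {x : ℝ} {r : ℚ} (hx : x = (r : ℝ)) (h0 : 0 < Int.fract x)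
    (h1 : Int.fract x < 1) : ∃ r' : ℚ, (Int.fract x)⁻¹ = (r' : ℝ) ∧ r'.den < r.den := by
  set s : ℚ := r - (⌊r⌋ : ℚ) with hs
  have hsx : (s : ℝ) = Int.fract x := by
    rw [hx, Int.fract, Rat.floor_cast, hs]
    push_cast
    ring
  have hs0 : 0 < s := by
    have : (0 : ℝ) < (s : ℝ) := by rw [hsx]; exact h0
    exact_mod_cast this
  have hs1 : s < 1 := by
    have : (s : ℝ) < 1 := by rw [hsx]; exact h1
    exact_mod_cast this
  have hsden : s.den ∣ r.den := by
    have : s = r + ((-⌊r⌋ : ℤ) : ℚ) := by rw [hs]; push_cast; ring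
    rw [this]
    exact den_add_int r (-⌊r⌋)
  have hsdenle : s.den ≤ r.den := Nat.le_of_dvd r.pos hsden
  have hnum : s.num < s.den := by
    have hd : (0 : ℚ) < (s.den : ℚ) := by exact_mod_cast s.pos
    rw [← Rat.num_div_den s, div_lt_one hd] at hs1
    exact_mod_cast hs1
  have hnum0 : 0 < s.num := Rat.num_pos.mpr hs0
  refine ⟨s⁻¹, ?_, ?_⟩
  · rw [Rat.cast_inv, hsx]
  · have hdvd : ((s⁻¹).den : ℤ) ∣ s.num := by
      have hinv : s⁻¹ = Rat.divInt (s.den : ℤ) s.num := Rat.inv_def s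
      rw [hinv]
      exact Rat.den_dvd _ _
    have hle : ((s⁻¹).den : ℤ) ≤ s.num := Int.le_of_dvd hnum0 hdvd
    have : ((s⁻¹).den : ℤ) < s.den := lt_of_le_of_lt hle hnum
    have h2 : (s⁻¹).den < s.den := by exact_mod_cast this
    omega

lemma tF_irrational : Irrational (tF 0) := by
  have key : ∀ (d : ℕ) (q : ℚ) (k : ℕ), q.den ≤ d → tF k ≠ (q : ℝ) := by
    intro d
    induction d with
    | zero => intro q k hd; have := q.pos; omega
    | succ d ih =>
        intro q k hd heq
        have h0 : 0 < Int.fract (tF k) := by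
          rw [tF_fract]; exact inv_pos.mpr (tF_pos (k + 1))
        have h1 : Int.fract (tF k) < 1 := by
          rw [tF_fract]
          have h2 := tF_ge_two (k + 1)
          rw [inv_lt_one_iff₀]
          right; linarith
        obtain ⟨r', hr', hden⟩ := rat_descent heq h0 h1
        have htk : tF (k + 1) = (r' : ℝ) := by
          rw [← hr', tF_fract, inv_inv]
        exact ih r' (k + 1) (by omega) htk
  intro ⟨q, hq⟩
  exact key q.den q 0 le_rfl hq.symm

lemma beta_hup : ∀ ε : ℝ, 0 < ε → ∀ N : ℝ,
    ∃ t : ℝ, N ≤ t ∧ 1 ≤ t ∧ t * psi2sFn (tF 0) t ≤ 1 / 2 + ε := by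
  intro ε hε N
  have hβ : Irrational (tF 0) := tF_irrational
  set M : ℝ := max 1 (3 / (2 * ε)) with hM
  have hM1 : (1 : ℝ) ≤ M := le_max_left _ _
  have hM0 : (0 : ℝ) < M := by linarith
  have hM3 : 3 ≤ 2 * M * ε := by
    have h := le_max_right 1 (3 / (2 * ε))
    calc (3 : ℝ) = (3 / (2 * ε)) * (2 * ε) := by field_simp
      _ ≤ M * (2 * ε) := mul_le_mul_of_nonneg_right h (by positivity)
      _ = 2 * M * ε := by ring
  obtain ⟨n₀, hn₀⟩ := exists_nat_ge (max M N)
  have hn₀M : M ≤ (n₀ : ℝ) := (le_max_left M N).trans hn₀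
  have hn₀N : N ≤ (n₀ : ℝ) := (le_max_right M N).trans hn₀
  set n : ℕ := 2 * n₀ with hn
  have ha2 : cfA (tF 0) (n + 2) = 2 := by
    rw [cfA_tF]
    unfold bA
    have hmod : (n + 2) % 2 = 0 := by omega
    simp [hmod]
  have hA1 : M ≤ (cfA (tF 0) (n + 1) : ℝ) := by
    rw [cfA_tF]
    unfold bA
    have hmod : (n + 1) % 2 = 1 := by omega
    simp only [hmod, if_pos]
    push_cast
    have : (n₀ : ℝ) ≤ (n : ℝ) := by push_cast [hn]; linarith [Nat.cast_nonneg (α := ℝ) n₀]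
    linarith
  have hA3 : M ≤ (cfA (tF 0) (n + 3) : ℝ) := by
    rw [cfA_tF]
    unfold bA
    have hmod : (n + 3) % 2 = 1 := by omega
    simp only [hmod, if_pos]
    push_cast
    have : (n₀ : ℝ) ≤ (n : ℝ) := by push_cast [hn]; linarith [Nat.cast_nonneg (α := ℝ) n₀]
    linarith
  have hval := val1_precise hβ n hM1 ha2 hA1 hA3
  have hbound : (M + 1) ^ 2 / (2 * M ^ 2) ≤ 1 / 2 + ε := by
    rw [div_le_iff₀ (by positivity)]
    nlinarith [mul_le_mul_of_nonneg_right hM3 hM0.le]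
  -- the pair
  set P : ℤ := cfNum (tF 0) (n + 1) + cfNum (tF 0) n with hP
  set Q : ℤ := cfDen (tF 0) (n + 1) + cfDen (tF 0) n with hQ
  have hQ1 : 1 ≤ Q := by
    have := cfDen_one_le hβ (n + 1); have := cfDen_one_le hβ n; omega
  have hQ0 : (0 : ℝ) ≤ (Q : ℝ) := by exact_mod_cast hQ1.trans' (by norm_num)
  have hne := pair1_not hβ n (by rw [ha2])
  refine ⟨(Q : ℝ), ?_, by exact_mod_cast hQ1, ?_⟩
  · have h1 : (n : ℤ) ≤ cfDen (tF 0) n := cfDen_ge hβ n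
    have h2 : (n : ℤ) ≤ Q := by
      have := cfDen_one_le hβ (n + 1); omega
    have h3 : (n : ℝ) ≤ (Q : ℝ) := by exact_mod_cast h2
    have h4 : (n₀ : ℝ) ≤ (n : ℝ) := by push_cast [hn]; linarith [Nat.cast_nonneg (α := ℝ) n₀]
    linarith
  · have hle := psi2s_le (tF 0) hQ1 (le_refl (Q : ℝ)) hne
    have hc : 0 ≤ FF (tF 0) (n + 1) - FF (tF 0) (n + 2) := by
      have := FF_succ_lt hβ (n + 1); linarith
    have habs : |(Q : ℝ) * (tF 0) - (P : ℝ)| = FF (tF 0) (n + 1) - FF (tF 0) (n + 2) := by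
      rw [hP, hQ, pair1_theta hβ n, abs_signed hc]
    calc (Q : ℝ) * psi2sFn (tF 0) (Q : ℝ)
        ≤ (Q : ℝ) * |(Q : ℝ) * (tF 0) - (P : ℝ)| := mul_le_mul_of_nonneg_left hle hQ0
      _ = (Q : ℝ) * (FF (tF 0) (n + 1) - FF (tF 0) (n + 2)) := by rw [habs]
      _ ≤ (M + 1) ^ 2 / (2 * M ^ 2) := by rw [hQ]; exact_mod_cast hval
      _ ≤ 1 / 2 + ε := hbound

end Stmt9

/-- For every irrational `α` one has `𝔨*(α) ≥ 1/2`, and there exists an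
irrational `β` with `𝔨*(β) = 1/2`; in particular `1/2` is the minimal element of `𝕃₂*`. -/
theorem stmt9 :
    (∀ α : ℝ, Irrational α → (1 : ℝ) / 2 ≤ ksOf α) ∧
    (∃ β : ℝ, Irrational β ∧ ksOf β = 1 / 2) ∧
    IsLeast L2s (1 / 2) := by
  have hβ : Irrational (Stmt9.tF 0) := Stmt9.tF_irrational
  have hβhalf : ksOf (Stmt9.tF 0) = 1 / 2 := Stmt9.ksOf_eq_half hβ Stmt9.beta_hup
  refine ⟨fun α hα => Stmt9.ksOf_ge_half hα, ⟨Stmt9.tF 0, hβ, hβhalf⟩, ?_, ?_⟩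
  · exact ⟨Stmt9.tF 0, hβ, hβhalf⟩
  · rintro x ⟨α, hα, rfl⟩
    exact Stmt9.ksOf_ge_half hα
end

section
/- Let n ≥ 3 and suppose a_n ≥ 3. Then q_{n-2}+q_{n-1}, 2q_{n-1}, q_n − q_{n-1} are three successive elements of 𝔔(α); moreover their associated values satisfy ξ_{n-2} − ξ_{n-1} > 2ξ_{n-1} > ξ_{n-1} + ξ_n. -/
open Filter Real Set

/-! ### Auxiliary development for Statement 11 -/

namespace Stmt11Aux

variable {α : ℝ}

lemma fract_def (x : ℝ) : Int.fract x = x - ⌊x⌋ := rfl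

lemma gauss_irr (hα : Irrational α) : ∀ k, Irrational (gaussIter α k)
  | 0 => hα
  | (k+1) => by
      have h := gauss_irr hα k
      have h2 : Irrational (Int.fract (gaussIter α k)) := by
        rw [fract_def]; exact h.sub_intCast _
      show Irrational (Int.fract (gaussIter α k))⁻¹
      exact h2.inv

lemma fract_pos (hα : Irrational α) (k : ℕ) : 0 < Int.fract (gaussIter α k) :=
  Int.fract_pos.mpr ((gauss_irr hα k).ne_int ⌊gaussIter α k⌋)

lemma gauss_gt_one (hα : Irrational α) (k : ℕ) : 1 < gaussIter α (k+1) := by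
  show 1 < (Int.fract (gaussIter α k))⁻¹
  have h1 := fract_pos hα k
  have h2 := Int.fract_lt_one (gaussIter α k)
  rw [lt_inv_comm₀ one_pos h1]
  simpa using h2

lemma cfA_one_le (hα : Irrational α) (k : ℕ) : 1 ≤ cfA α (k+1) :=
  Int.le_floor.mpr (by exact_mod_cast (gauss_gt_one hα k).le)

lemma floor_alpha (h0 : 0 < α) (h1 : α < 1) : ⌊α⌋ = 0 := by
  rw [Int.floor_eq_zero_iff]; exact ⟨h0.le, h1⟩

/-- `E α k = q_{k-1} α - p_{k-1}` in shifted indexing. -/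
noncomputable def E (α : ℝ) (k : ℕ) : ℝ := (cfQ α k : ℝ) * α - (cfP α k : ℝ)

lemma E_zero : E α 0 = -1 := by simp [E, cfQ, cfP]

lemma E_one : E α 1 = Int.fract α := by
  rw [fract_def]; simp [E, cfQ, cfP]

lemma cfQ_rec (k : ℕ) : cfQ α (k+2) = cfA α (k+1) * cfQ α (k+1) + cfQ α k := rfl

lemma cfP_rec (k : ℕ) : cfP α (k+2) = cfA α (k+1) * cfP α (k+1) + cfP α k := rfl

lemma E_two_step (k : ℕ) : E α (k+2) = (cfA α (k+1) : ℝ) * E α (k+1) + E α k := by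
  simp only [E, cfQ_rec, cfP_rec]; push_cast; ring

lemma E_rec (hα : Irrational α) : ∀ k, E α (k+1) = -(E α k * Int.fract (gaussIter α k))
  | 0 => by rw [E_one, E_zero]; show Int.fract α = -(-1 * Int.fract α); ring
  | (k+1) => by
      have ih := E_rec hα k
      have hf : Int.fract (gaussIter α k) ≠ 0 := ne_of_gt (fract_pos hα k)
      have hg : gaussIter α (k+1) = (Int.fract (gaussIter α k))⁻¹ := rfl
      have hfr : Int.fract (gaussIter α (k+1))
          = gaussIter α (k+1) - (cfA α (k+1) : ℝ) := rfl
      have hEk : E α k = -(E α (k+1) / Int.fract (gaussIter α k)) := by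
        rw [ih]; field_simp
      rw [E_two_step, hfr, hg, hEk]
      field_simp
      ring

lemma E_ne (hα : Irrational α) : ∀ k, E α k ≠ 0
  | 0 => by rw [E_zero]; norm_num
  | (k+1) => by
      rw [E_rec hα k]
      exact neg_ne_zero.mpr (mul_ne_zero (E_ne hα k) (ne_of_gt (fract_pos hα k)))

lemma E_mul_neg (hα : Irrational α) (k : ℕ) : E α k * E α (k+1) < 0 := by
  rw [E_rec hα k]
  have h1 := fract_pos hα k
  rcases (E_ne hα k).lt_or_gt with h | h
  · nlinarith [mul_pos (mul_pos_of_neg_of_neg h h) h1]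
  · nlinarith [mul_pos (mul_pos h h) h1]

lemma E_abs_pos (hα : Irrational α) (k : ℕ) : 0 < |E α k| := abs_pos.mpr (E_ne hα k)

lemma E_abs_lt (hα : Irrational α) (k : ℕ) : |E α (k+1)| < |E α k| := by
  rw [E_rec hα k, abs_neg, abs_mul, abs_of_pos (fract_pos hα k)]
  have h1 := Int.fract_lt_one (gaussIter α k)
  have h2 := E_abs_pos hα k
  nlinarith

lemma E_abs_rec (hα : Irrational α) (k : ℕ) :
    |E α k| = (cfA α (k+1) : ℝ) * |E α (k+1)| + |E α (k+2)| := by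
  have hrec := E_two_step (α := α) k
  have h1 := E_mul_neg hα k
  have h2 := E_mul_neg hα (k+1)
  rcases (E_ne hα (k+1)).lt_or_gt with hv | hv
  · have hu : 0 < E α k := by nlinarith
    have hw : 0 < E α (k+2) := by nlinarith
    rw [abs_of_pos hu, abs_of_neg hv, abs_of_pos hw]; linarith [hrec]
  · have hu : E α k < 0 := by nlinarith
    have hw : E α (k+2) < 0 := by nlinarith
    rw [abs_of_neg hu, abs_of_pos hv, abs_of_neg hw]; linarith [hrec]

lemma cfQ_bounds (hα : Irrational α) : ∀ k, 0 ≤ cfQ α k ∧ 1 ≤ cfQ α (k+1)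
  | 0 => ⟨by simp [cfQ], by simp [cfQ]⟩
  | (k+1) => by
      obtain ⟨hh1, hh2⟩ := cfQ_bounds hα k
      refine ⟨by linarith, ?_⟩
      show 1 ≤ cfA α (k+1) * cfQ α (k+1) + cfQ α k
      have := cfA_one_le hα k
      nlinarith

lemma cfQ_le_succ (hα : Irrational α) : ∀ k, cfQ α k ≤ cfQ α (k+1)
  | 0 => by simp [cfQ]
  | (k+1) => by
      obtain ⟨hh1, hh2⟩ := cfQ_bounds hα k
      show cfQ α (k+1) ≤ cfA α (k+1) * cfQ α (k+1) + cfQ α k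
      have := cfA_one_le hα k
      nlinarith

lemma cfQ_mono (hα : Irrational α) : Monotone (cfQ α) :=
  monotone_nat_of_le_succ (cfQ_le_succ hα)

lemma cfQ_succ_lt (hα : Irrational α) (k : ℕ) : cfQ α (k+2) < cfQ α (k+3) := by
  show cfQ α (k+2) < cfA α (k+2) * cfQ α (k+2) + cfQ α (k+1)
  have h1 := cfA_one_le hα (k+1)
  have h2 := (cfQ_bounds hα (k+1)).2
  have h3 := (cfQ_bounds hα k).2
  nlinarith

lemma cfP_nonneg (hα : Irrational α) (h0 : 0 < α) (h1 : α < 1) :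
    ∀ k, 0 ≤ cfP α k ∧ 0 ≤ cfP α (k+1)
  | 0 => ⟨by simp [cfP], by simp [cfP, floor_alpha h0 h1]⟩
  | (k+1) => by
      obtain ⟨hh1, hh2⟩ := cfP_nonneg hα h0 h1 k
      refine ⟨hh2, ?_⟩
      show 0 ≤ cfA α (k+1) * cfP α (k+1) + cfP α k
      have := cfA_one_le hα k
      nlinarith

lemma cfNum_nonneg (hα : Irrational α) (h0 : 0 < α) (h1 : α < 1) (k : ℕ) :
    0 ≤ cfNum α k := (cfP_nonneg hα h0 h1 k).2

lemma cfDet : ∀ k, cfP α (k+1) * cfQ α k - cfP α k * cfQ α (k+1) = (-1)^(k+1)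
  | 0 => by simp [cfP, cfQ]
  | (k+1) => by
      have ih := cfDet k
      show cfP α (k+2) * cfQ α (k+1) - cfP α (k+1) * cfQ α (k+2) = (-1)^(k+2)
      rw [cfP_rec, cfQ_rec]
      linear_combination (-1 : ℤ) * ih

lemma decomp (k : ℕ) (p q : ℤ) :
    ∃ s t : ℤ, q = s * cfQ α (k+1) + t * cfQ α k ∧ p = s * cfP α (k+1) + t * cfP α k := by
  have hδ2 : (cfP α (k+1) * cfQ α k - cfP α k * cfQ α (k+1)) *
      (cfP α (k+1) * cfQ α k - cfP α k * cfQ α (k+1)) = 1 := by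
    rw [cfDet k, ← pow_add]
    exact Even.neg_one_pow ⟨k+1, by ring⟩
  refine ⟨(cfP α (k+1) * cfQ α k - cfP α k * cfQ α (k+1)) * (p * cfQ α k - q * cfP α k),
    (cfP α (k+1) * cfQ α k - cfP α k * cfQ α (k+1)) * (q * cfP α (k+1) - p * cfQ α (k+1)),
    ?_, ?_⟩
  · linear_combination (-q : ℤ) * hδ2
  · linear_combination (-p : ℤ) * hδ2

lemma abs_comb {x y : ℝ} (h : y * x < 0) (s t : ℤ) :
    |(s : ℝ) * x + t * y| = abs ((s : ℝ) * |x| - t * |y|) := by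
  rcases lt_trichotomy x 0 with hx | hx | hx
  · have hy : 0 < y := by
      by_contra hc; push_neg at hc; nlinarith
    rw [abs_of_neg hx, abs_of_pos hy]
    rw [show (s:ℝ)*x + t*y = -((s:ℝ)*(-x) - t*y) by ring, abs_neg]
  · exfalso; rw [hx] at h; simp at h
  · have hy : y < 0 := by
      by_contra hc; push_neg at hc; nlinarith
    rw [abs_of_pos hx, abs_of_neg hy]
    congr 1; ring

lemma abs_add_opp {x y : ℝ} (h : x * y < 0) (hlt : |y| < |x|) : |x + y| = |x| - |y| := by
  rcases lt_trichotomy x 0 with hx | hx | hx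
  · have hy : 0 < y := by by_contra hc; push_neg at hc; nlinarith
    rw [abs_of_neg hx, abs_of_pos hy] at hlt ⊢
    rw [abs_of_neg (by linarith : x + y < 0)]; ring
  · exfalso; rw [hx] at h; simp at h
  · have hy : y < 0 := by by_contra hc; push_neg at hc; nlinarith
    rw [abs_of_pos hx, abs_of_neg hy] at hlt ⊢
    rw [abs_of_pos (by linarith : 0 < x + y)]; ring

lemma abs_sub_opp {x y : ℝ} (h : x * y < 0) : |x - y| = |x| + |y| := by
  rcases lt_trichotomy x 0 with hx | hx | hx
  · have hy : 0 < y := by by_contra hc; push_neg at hc; nlinarith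
    rw [abs_of_neg hx, abs_of_pos hy, abs_of_neg (by linarith : x - y < 0)]; ring
  · exfalso; rw [hx] at h; simp at h
  · have hy : y < 0 := by by_contra hc; push_neg at hc; nlinarith
    rw [abs_of_pos hx, abs_of_neg hy, abs_of_pos (by linarith : 0 < x - y)]; ring

/-- Purely arithmetic master lemma for the lower bounds. -/
lemma master {η0 η1 η2 : ℝ} {a Q0 Q1 q s t : ℤ}
    (hQ0 : 1 ≤ Q0) (hQ01 : Q0 < Q1)
    (hη2 : 0 < η2) (hη12 : η2 < η1)
    (hrel : η0 = (a : ℝ) * η1 + η2) (ha : 3 ≤ a)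
    (hq : q = s * Q1 + t * Q0) (hq1 : 1 ≤ q)
    (hne : ¬(s = 1 ∧ t = 0)) :
    (q < Q0 + Q1 → η0 ≤ |(s:ℝ) * η1 - t * η0|) ∧
    (q < 2 * Q1 → η0 - η1 ≤ |(s:ℝ) * η1 - t * η0|) ∧
    (q < (a - 1) * Q1 + Q0 → 2 * η1 ≤ |(s:ℝ) * η1 - t * η0|) := by
  have hη1 : 0 < η1 := lt_trans hη2 hη12
  have haR : (3 : ℝ) ≤ (a : ℝ) := by exact_mod_cast ha
  have hη01 : η1 < η0 := by nlinarith
  have hη0 : 0 < η0 := lt_trans hη1 hη01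
  have hQ1 : 2 ≤ Q1 := by omega
  rcases lt_trichotomy t 0 with ht | ht | ht
  · -- t ≤ -1, then s ≥ 1 and value ≥ η0 + η1
    have ht1 : t ≤ -1 := by omega
    have hs : 1 ≤ s := by
      by_contra hc; push_neg at hc
      nlinarith [mul_nonneg (by omega : (0:ℤ) ≤ -s) (by omega : (0:ℤ) ≤ Q1),
        mul_nonneg (by omega : (0:ℤ) ≤ -t) (by omega : (0:ℤ) ≤ Q0)]
    have hsR : (1 : ℝ) ≤ (s : ℝ) := by exact_mod_cast hs
    have htR : (t : ℝ) ≤ -1 := by exact_mod_cast ht1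
    have hval : η0 + η1 ≤ (s:ℝ) * η1 - t * η0 := by
      nlinarith [mul_nonneg (by linarith : (0:ℝ) ≤ (s:ℝ) - 1) hη1.le,
        mul_nonneg (by linarith : (0:ℝ) ≤ -(t:ℝ) - 1) hη0.le]
    have habs : η0 + η1 ≤ |(s:ℝ) * η1 - t * η0| := le_trans hval (le_abs_self _)
    exact ⟨fun _ => by linarith, fun _ => by linarith, fun _ => by linarith⟩
  · -- t = 0
    subst ht
    have hs : 1 ≤ s := by
      by_contra hc; push_neg at hc
      nlinarith [mul_nonneg (by omega : (0:ℤ) ≤ -s) (by omega : (0:ℤ) ≤ Q1)]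
    have hs2 : 2 ≤ s := by
      rcases eq_or_lt_of_le hs with h | h
      · exact absurd ⟨h.symm, rfl⟩ hne
      · omega
    have hq2 : 2 * Q1 ≤ q := by
      nlinarith [mul_nonneg (by omega : (0:ℤ) ≤ s - 2) (by omega : (0:ℤ) ≤ Q1)]
    have hsR : (2 : ℝ) ≤ (s : ℝ) := by exact_mod_cast hs2
    refine ⟨fun hc => absurd hc (by omega), fun hc => absurd hc (by omega),
      fun _ => le_trans ?_ (le_abs_self _)⟩
    push_cast
    nlinarith [mul_nonneg (by linarith : (0:ℝ) ≤ (s:ℝ) - 2) hη1.le]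
  · -- t ≥ 1
    have ht1 : 1 ≤ t := ht
    have htR : (1 : ℝ) ≤ (t : ℝ) := by exact_mod_cast ht1
    rcases le_or_gt s 0 with hs | hs
    · -- s ≤ 0 : value ≥ η0
      have hsR : (s : ℝ) ≤ 0 := by exact_mod_cast hs
      have hval : η0 ≤ -((s:ℝ) * η1 - t * η0) := by
        nlinarith [mul_nonneg (by linarith : (0:ℝ) ≤ (t:ℝ) - 1) hη0.le,
          mul_nonneg (by linarith : (0:ℝ) ≤ -(s:ℝ)) hη1.le]
      have habs : η0 ≤ |(s:ℝ) * η1 - t * η0| := le_trans hval (neg_le_abs _)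
      have h3 : 2 * η1 ≤ η0 := by
        nlinarith [mul_nonneg (by linarith : (0:ℝ) ≤ (a:ℝ) - 3) hη1.le]
      exact ⟨fun _ => habs, fun _ => by linarith, fun _ => by linarith⟩
    · -- s ≥ 1
      have hs1 : 1 ≤ s := hs
      have hqlb : Q0 + Q1 ≤ q := by
        nlinarith [mul_nonneg (by omega : (0:ℤ) ≤ s - 1) (by omega : (0:ℤ) ≤ Q1),
          mul_nonneg (by omega : (0:ℤ) ≤ t - 1) (by omega : (0:ℤ) ≤ Q0)]
      refine ⟨fun hc => absurd hc (by omega), fun hc => ?_, fun hc => ?_⟩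
      · -- q < 2 Q1 : then s = 1
        have hseq : s = 1 := by
          by_contra hc
          have hs2 : 2 ≤ s := by omega
          nlinarith [mul_nonneg (by omega : (0:ℤ) ≤ s - 2) (by omega : (0:ℤ) ≤ Q1),
            mul_nonneg (by omega : (0:ℤ) ≤ t - 1) (by omega : (0:ℤ) ≤ Q0)]
        have hsR1 : (s:ℝ) = 1 := by exact_mod_cast hseq
        have hval : η0 - η1 ≤ -((s:ℝ) * η1 - t * η0) := by
          nlinarith [mul_nonneg (by linarith : (0:ℝ) ≤ (t:ℝ) - 1) hη0.le]
        exact le_trans hval (neg_le_abs _)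
      · -- q < (a-1) Q1 + Q0 : then s ≤ a - 2
        have hsa : s ≤ a - 2 := by
          by_contra hcon
          have hs2 : a - 1 ≤ s := by omega
          nlinarith [mul_nonneg (by omega : (0:ℤ) ≤ s - (a - 1)) (by omega : (0:ℤ) ≤ Q1),
            mul_nonneg (by omega : (0:ℤ) ≤ t - 1) (by omega : (0:ℤ) ≤ Q0)]
        have hsaR : (s : ℝ) ≤ (a : ℝ) - 2 := by exact_mod_cast hsa
        have hta : (2:ℝ) ≤ (t:ℝ) * (a:ℝ) - s := by
          nlinarith [mul_nonneg (by linarith : (0:ℝ) ≤ (t:ℝ) - 1) (by linarith : (0:ℝ) ≤ (a:ℝ))]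
        have hval : 2 * η1 ≤ -((s:ℝ) * η1 - t * η0) := by
          nlinarith [mul_nonneg (by linarith : (0:ℝ) ≤ (t:ℝ)*(a:ℝ) - s - 2) hη1.le,
            mul_nonneg (by linarith : (0:ℝ) ≤ (t:ℝ) - 1) hη2.le]
        exact le_trans hval (neg_le_abs _)

lemma psi2_bdd (α t : ℝ) : BddBelow {x : ℝ | ∃ p q : ℤ, 1 ≤ q ∧ (q : ℝ) ≤ t ∧
    (∀ n : ℕ, ¬(p = cfNum α n ∧ q = cfDen α n)) ∧ x = |(q : ℝ) * α - (p : ℝ)|} :=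
  ⟨0, fun x hx => by obtain ⟨p, q, _, _, _, hx⟩ := hx; rw [hx]; exact abs_nonneg _⟩

lemma psi2_le {t : ℝ} {p q : ℤ} (hq : 1 ≤ q) (hqt : (q : ℝ) ≤ t)
    (hnc : ∀ n : ℕ, ¬(p = cfNum α n ∧ q = cfDen α n)) :
    psi2Fn α t ≤ |(q : ℝ) * α - (p : ℝ)| :=
  csInf_le (psi2_bdd α t) ⟨p, q, hq, hqt, hnc, rfl⟩

lemma psi2_nonempty (hα : Irrational α) (h0 : 0 < α) (h1 : α < 1) {t : ℝ} (ht : 1 ≤ t) :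
    Set.Nonempty {x : ℝ | ∃ p q : ℤ, 1 ≤ q ∧ (q : ℝ) ≤ t ∧
      (∀ n : ℕ, ¬(p = cfNum α n ∧ q = cfDen α n)) ∧ x = |(q : ℝ) * α - (p : ℝ)|} := by
  refine ⟨|((1:ℤ) : ℝ) * α - ((-1 : ℤ) : ℝ)|, -1, 1, le_refl 1, by exact_mod_cast ht, ?_, rfl⟩
  intro n hn
  have h2 := cfNum_nonneg hα h0 h1 n
  rw [← hn.1] at h2
  norm_num at h2

lemma le_psi2 (hα : Irrational α) (h0 : 0 < α) (h1 : α < 1) {t c : ℝ} (ht : 1 ≤ t)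
    (h : ∀ p q : ℤ, 1 ≤ q → (q : ℝ) ≤ t → (∀ n : ℕ, ¬(p = cfNum α n ∧ q = cfDen α n)) →
      c ≤ |(q : ℝ) * α - (p : ℝ)|) : c ≤ psi2Fn α t :=
  le_csInf (psi2_nonempty hα h0 h1 ht) fun x hx => by
    obtain ⟨p, q, h1q, h2q, h3q, hx⟩ := hx; rw [hx]; exact h p q h1q h2q h3q

lemma psi2_congr (m : ℤ) {t : ℝ} (h1 : (m : ℝ) ≤ t) (h2 : t < (m : ℝ) + 1) :
    psi2Fn α t = psi2Fn α (m : ℝ) := by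
  unfold psi2Fn
  congr 1
  ext x
  constructor
  · rintro ⟨p, q, hq, hqt, hnc, hx⟩
    refine ⟨p, q, hq, ?_, hnc, hx⟩
    have hq1 : (q:ℝ) < (m:ℝ) + 1 := lt_of_le_of_lt hqt h2
    have hq2 : q < m + 1 := by exact_mod_cast hq1
    exact_mod_cast (by omega : q ≤ m)
  · rintro ⟨p, q, hq, hqt, hnc, hx⟩
    exact ⟨p, q, hq, le_trans hqt h1, hnc, hx⟩

lemma discont {m : ℤ} (hlt : psi2Fn α (m : ℝ) < psi2Fn α ((m : ℝ) - 1)) :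
    ¬ ContinuousAt (psi2Fn α) (m : ℝ) := by
  intro hc
  have h1 : Filter.Tendsto (psi2Fn α) (nhdsWithin (m:ℝ) (Set.Iio (m:ℝ)))
      (nhds (psi2Fn α (m:ℝ))) := hc.tendsto.mono_left nhdsWithin_le_nhds
  have hmem : Set.Ioo ((m:ℝ)-1) (m:ℝ) ∈ nhdsWithin (m:ℝ) (Set.Iio (m:ℝ)) :=
    Ioo_mem_nhdsLT_of_mem ⟨by linarith, le_refl _⟩
  have hev : (psi2Fn α) =ᶠ[nhdsWithin (m:ℝ) (Set.Iio (m:ℝ))]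
      (fun _ => psi2Fn α ((m:ℝ)-1)) := by
    refine Filter.eventuallyEq_of_mem hmem fun u hu => ?_
    have he := psi2_congr (α := α) (m-1) (t := u) (by push_cast; linarith [hu.1])
      (by push_cast; linarith [hu.2])
    rw [he]
    congr 1
    push_cast
    ring
  have h2 : Filter.Tendsto (psi2Fn α) (nhdsWithin (m:ℝ) (Set.Iio (m:ℝ)))
      (nhds (psi2Fn α ((m:ℝ)-1))) := by
    rw [Filter.tendsto_congr' hev]; exact tendsto_const_nhds
  have := tendsto_nhds_unique h1 h2
  linarith

lemma cont {m : ℤ} (heq : psi2Fn α ((m:ℝ) - 1) = psi2Fn α (m:ℝ)) :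
    ContinuousAt (psi2Fn α) (m:ℝ) := by
  have hmem : Set.Ioo ((m:ℝ)-1) ((m:ℝ)+1) ∈ nhds (m:ℝ) :=
    Ioo_mem_nhds (by linarith) (by linarith)
  refine Filter.EventuallyEq.continuousAt (y := psi2Fn α (m:ℝ))
    (Filter.eventuallyEq_of_mem hmem fun u hu => ?_)
  rcases lt_or_ge u (m:ℝ) with h | h
  · have e1 : psi2Fn α u = psi2Fn α ((m - 1 : ℤ):ℝ) :=
      psi2_congr (m-1) (by push_cast; linarith [hu.1]) (by push_cast; linarith)
    have e2 : ((m-1 : ℤ):ℝ) = (m:ℝ) - 1 := by push_cast; ring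
    rw [e1, e2, heq]
  · exact psi2_congr m h (by linarith [hu.2])

lemma no_conv (hα : Irrational α) (k : ℕ) {q : ℤ} (hl : cfQ α (k+3) < q)
    (hr : q < cfQ α (k+4)) (j : ℕ) : q ≠ cfDen α j := by
  intro h
  have hdj : cfDen α j = cfQ α (j+1) := rfl
  rcases le_or_gt (j+1) (k+3) with hj | hj
  · have hm := cfQ_mono hα hj
    rw [hdj] at h; omega
  · have hm := cfQ_mono hα (by omega : k+4 ≤ j+1)
    rw [hdj] at h; omega

lemma value_lb (hα : Irrational α) (k : ℕ) (ha : 3 ≤ cfA α (k+3)) (p q : ℤ) (hq1 : 1 ≤ q)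
    (hne : ¬(p = cfP α (k+3) ∧ q = cfQ α (k+3))) :
    (q < cfQ α (k+2) + cfQ α (k+3) → |E α (k+2)| ≤ |(q:ℝ) * α - (p:ℝ)|) ∧
    (q < 2 * cfQ α (k+3) → |E α (k+2)| - |E α (k+3)| ≤ |(q:ℝ) * α - (p:ℝ)|) ∧
    (q < (cfA α (k+3) - 1) * cfQ α (k+3) + cfQ α (k+2) →
      2 * |E α (k+3)| ≤ |(q:ℝ) * α - (p:ℝ)|) := by
  obtain ⟨s, t, hsq, hsp⟩ := decomp (α := α) (k+2) p q
  have hval : (q:ℝ) * α - (p:ℝ) = (s:ℝ) * E α (k+3) + (t:ℝ) * E α (k+2) := by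
    rw [hsq, hsp]; simp only [E]; push_cast; ring
  rw [hval, abs_comb (E_mul_neg hα (k+2)) s t]
  have hne' : ¬(s = 1 ∧ t = 0) := by
    rintro ⟨rfl, rfl⟩
    exact hne ⟨by linarith [hsp], by linarith [hsq]⟩
  exact master (cfQ_bounds hα (k+1)).2 (cfQ_succ_lt hα k) (E_abs_pos hα (k+4))
    (E_abs_lt hα (k+3)) (E_abs_rec hα (k+2)) ha hsq hq1 hne'

end Stmt11Aux

open Stmt11Aux

/-- Let `α ∈ (0,1)` be irrational, `n ≥ 3` and `aₙ ≥ 3`. Then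
`q_{n-2}+q_{n-1}`, `2q_{n-1}`, `qₙ − q_{n-1}` are three successive elements of `𝔔(α)`,
and `ξ_{n-2} − ξ_{n-1} > 2ξ_{n-1} > ξ_{n-1} + ξₙ`. -/
theorem stmt11 (α : ℝ) (hα : Irrational α) (h0 : 0 < α) (h1 : α < 1)
    (n : ℕ) (hn : 3 ≤ n) (ha : 3 ≤ cfA α n) :
    SuccessiveIn (QSet α)
      [cfDen α (n - 2) + cfDen α (n - 1), 2 * cfDen α (n - 1),
        cfDen α n - cfDen α (n - 1)] ∧
    cfXi α (n - 2) - cfXi α (n - 1) > 2 * cfXi α (n - 1) ∧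
    2 * cfXi α (n - 1) > cfXi α (n - 1) + cfXi α n := by
  obtain ⟨k, rfl⟩ : ∃ k, n = k + 3 := ⟨n - 3, by omega⟩
  have e2 : k + 3 - 2 = k + 1 := by omega
  have e1 : k + 3 - 1 = k + 2 := by omega
  rw [e1, e2]
  clear hn
  -- basic integer facts
  have hQ0 : 1 ≤ cfQ α (k+2) := (cfQ_bounds hα (k+1)).2
  have hQ01 : cfQ α (k+2) < cfQ α (k+3) := cfQ_succ_lt hα k
  have hQ1 : 2 ≤ cfQ α (k+3) := by omega
  have haQ : cfQ α (k+4) = cfA α (k+3) * cfQ α (k+3) + cfQ α (k+2) := cfQ_rec (k+2)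
  have h3Q : 3 * cfQ α (k+3) ≤ cfA α (k+3) * cfQ α (k+3) :=
    mul_le_mul_of_nonneg_right ha (by omega)
  have hCform : cfQ α (k+4) - cfQ α (k+3)
      = (cfA α (k+3) - 1) * cfQ α (k+3) + cfQ α (k+2) := by rw [haQ]; ring
  -- real-valued ξ facts
  have hXi2 : cfXi α (k+1) = |E α (k+2)| := rfl
  have hXi1 : cfXi α (k+2) = |E α (k+3)| := rfl
  have hXi0 : cfXi α (k+3) = |E α (k+4)| := rfl
  have hη2 : 0 < |E α (k+4)| := E_abs_pos hα (k+4)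
  have hη12 : |E α (k+4)| < |E α (k+3)| := E_abs_lt hα (k+3)
  have hη1 : 0 < |E α (k+3)| := E_abs_pos hα (k+3)
  have hrel : |E α (k+2)| = (cfA α (k+3) : ℝ) * |E α (k+3)| + |E α (k+4)| :=
    E_abs_rec hα (k+2)
  have haR : (3 : ℝ) ≤ (cfA α (k+3) : ℝ) := by exact_mod_cast ha
  -- the three jump values
  set c0 : ℝ := |E α (k+2)| with hc0def
  set c1 : ℝ := |E α (k+2)| - |E α (k+3)| with hc1def
  set c2 : ℝ := 2 * |E α (k+3)| with hc2def
  set c3 : ℝ := |E α (k+3)| + |E α (k+4)| with hc3def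
  have hc10 : c1 < c0 := by rw [hc1def, hc0def]; linarith
  have hc21 : c2 < c1 := by
    rw [hc2def, hc1def, ← hc0def, hrel]
    nlinarith [mul_nonneg (by linarith : (0:ℝ) ≤ (cfA α (k+3):ℝ) - 3) hη1.le]
  have hc32 : c3 < c2 := by rw [hc3def, hc2def]; linarith
  -- the three break points
  set A : ℤ := cfQ α (k+2) + cfQ α (k+3) with hAdef
  set B : ℤ := 2 * cfQ α (k+3) with hBdef
  set C : ℤ := cfQ α (k+4) - cfQ α (k+3) with hCdef
  have hAB : A < B := by omega
  have hBC : B < C := by omega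
  have hA1 : 2 ≤ A := by omega
  have hAQ : cfQ α (k+3) < A ∧ A < cfQ α (k+4) := by constructor <;> omega
  have hBQ : cfQ α (k+3) < B ∧ B < cfQ α (k+4) := by constructor <;> omega
  have hCQ : cfQ α (k+3) < C ∧ C < cfQ α (k+4) := by constructor <;> omega
  -- upper bounds via explicit witnesses
  have wA : ∀ m : ℤ, A ≤ m → psi2Fn α (m:ℝ) ≤ c1 := by
    intro m hm
    have hx : ((A:ℤ):ℝ) * α - (((cfP α (k+2) + cfP α (k+3)) : ℤ):ℝ)
        = E α (k+2) + E α (k+3) := by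
      rw [hAdef]; simp only [E]; push_cast; ring
    have hv : |((A:ℤ):ℝ) * α - (((cfP α (k+2) + cfP α (k+3)) : ℤ):ℝ)| = c1 := by
      rw [hx, abs_add_opp (E_mul_neg hα (k+2)) (E_abs_lt hα (k+2)), hc1def]
    have hle := psi2_le (α := α) (t := (m:ℝ)) (p := cfP α (k+2) + cfP α (k+3)) (q := A)
      (by omega) (by exact_mod_cast hm)
      (fun j hj => absurd hj.2 (no_conv hα k hAQ.1 hAQ.2 j))
    rw [hv] at hle
    exact hle
  have wB : ∀ m : ℤ, B ≤ m → psi2Fn α (m:ℝ) ≤ c2 := by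
    intro m hm
    have hx : ((B:ℤ):ℝ) * α - (((2 * cfP α (k+3)) : ℤ):ℝ) = 2 * E α (k+3) := by
      rw [hBdef]; simp only [E]; push_cast; ring
    have hv : |((B:ℤ):ℝ) * α - (((2 * cfP α (k+3)) : ℤ):ℝ)| = c2 := by
      rw [hx, abs_mul, hc2def]
      norm_num
    have hle := psi2_le (α := α) (t := (m:ℝ)) (p := 2 * cfP α (k+3)) (q := B)
      (by omega) (by exact_mod_cast hm)
      (fun j hj => absurd hj.2 (no_conv hα k hBQ.1 hBQ.2 j))
    rw [hv] at hle
    exact hle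
  have wC : ∀ m : ℤ, C ≤ m → psi2Fn α (m:ℝ) ≤ c3 := by
    intro m hm
    have hx : ((C:ℤ):ℝ) * α - (((cfP α (k+4) - cfP α (k+3)) : ℤ):ℝ)
        = E α (k+4) - E α (k+3) := by
      rw [hCdef]; simp only [E]; push_cast; ring
    have hv : |((C:ℤ):ℝ) * α - (((cfP α (k+4) - cfP α (k+3)) : ℤ):ℝ)| = c3 := by
      rw [hx, abs_sub_opp (mul_comm (E α (k+3)) (E α (k+4)) ▸ E_mul_neg hα (k+3)),
        hc3def]
      ring
    have hle := psi2_le (α := α) (t := (m:ℝ)) (p := cfP α (k+4) - cfP α (k+3)) (q := C)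
      (by omega) (by exact_mod_cast hm)
      (fun j hj => absurd hj.2 (no_conv hα k hCQ.1 hCQ.2 j))
    rw [hv] at hle
    exact hle
  -- lower bounds via the master lemma
  have lbA : ∀ m : ℤ, 1 ≤ m → m < A → c0 ≤ psi2Fn α (m:ℝ) := by
    intro m h1m h2m
    refine le_psi2 hα h0 h1 (by exact_mod_cast h1m) fun p q hq hqt hnc => ?_
    have hqm : q ≤ m := by exact_mod_cast hqt
    exact (value_lb hα k ha p q hq
      (fun hh => hnc (k+2) ⟨hh.1, hh.2⟩)).1 (by omega)
  have lbB : ∀ m : ℤ, 1 ≤ m → m < B → c1 ≤ psi2Fn α (m:ℝ) := by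
    intro m h1m h2m
    refine le_psi2 hα h0 h1 (by exact_mod_cast h1m) fun p q hq hqt hnc => ?_
    have hqm : q ≤ m := by exact_mod_cast hqt
    exact (value_lb hα k ha p q hq
      (fun hh => hnc (k+2) ⟨hh.1, hh.2⟩)).2.1 (by omega)
  have lbC : ∀ m : ℤ, 1 ≤ m → m < C → c2 ≤ psi2Fn α (m:ℝ) := by
    intro m h1m h2m
    refine le_psi2 hα h0 h1 (by exact_mod_cast h1m) fun p q hq hqt hnc => ?_
    have hqm : q ≤ m := by exact_mod_cast hqt
    exact (value_lb hα k ha p q hq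
      (fun hh => hnc (k+2) ⟨hh.1, hh.2⟩)).2.2 (by omega)
  -- exact values on the two plateaus
  have hval1 : ∀ m : ℤ, A ≤ m → m < B → psi2Fn α (m:ℝ) = c1 := fun m hm1 hm2 =>
    le_antisymm (wA m hm1) (lbB m (by omega) hm2)
  have hval2 : ∀ m : ℤ, B ≤ m → m < C → psi2Fn α (m:ℝ) = c2 := fun m hm1 hm2 =>
    le_antisymm (wB m hm1) (lbC m (by omega) hm2)
  have hcast : ∀ m : ℤ, ((m - 1 : ℤ):ℝ) = (m:ℝ) - 1 := fun m => by push_cast; ring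
  -- discontinuities
  have memA : A ∈ QSet α := by
    refine ⟨by omega, discont ?_⟩
    have hgeA := lbA (A-1) (by omega) (by omega)
    rw [hcast A] at hgeA
    have hleA := wA A (le_refl A)
    linarith
  have memB : B ∈ QSet α := by
    refine ⟨by omega, discont ?_⟩
    have hgeB := hval1 (B-1) (by omega) (by omega)
    rw [hcast B] at hgeB
    have hleB := wB B (le_refl B)
    linarith [hgeB.ge, hgeB.le]
  have memC : C ∈ QSet α := by
    refine ⟨by omega, discont ?_⟩
    have hgeC := hval2 (C-1) (by omega) (by omega)
    rw [hcast C] at hgeC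
    have hleC := wC C (le_refl C)
    linarith [hgeC.ge, hgeC.le]
  -- no discontinuity strictly between
  have gapAB : ∀ z ∈ QSet α, ¬(A < z ∧ z < B) := by
    rintro z hz ⟨h1z, h2z⟩
    refine hz.2 (cont ?_)
    have ez1 := hval1 (z-1) (by omega) (by omega)
    rw [hcast z] at ez1
    rw [ez1, hval1 z (by omega) h2z]
  have gapBC : ∀ z ∈ QSet α, ¬(B < z ∧ z < C) := by
    rintro z hz ⟨h1z, h2z⟩
    refine hz.2 (cont ?_)
    have ez1 := hval2 (z-1) (by omega) (by omega)
    rw [hcast z] at ez1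
    rw [ez1, hval2 z (by omega) h2z]
  -- assemble
  have hden1 : cfDen α (k+1) = cfQ α (k+2) := rfl
  have hden2 : cfDen α (k+2) = cfQ α (k+3) := rfl
  have hden3 : cfDen α (k+3) = cfQ α (k+4) := rfl
  refine ⟨⟨?_, ?_⟩, ?_, ?_⟩
  · intro x hx
    simp only [List.mem_cons, List.mem_singleton, List.not_mem_nil, or_false] at hx
    rcases hx with h | h | h
    · rw [h, hden1, hden2]; exact memA
    · rw [h, hden2]; exact memB
    · rw [h, hden3, hden2]; exact memC
  · simp only [List.Chain', List.isChain_cons_cons, List.isChain_singleton, and_true]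
    rw [hden1, hden2, hden3]
    exact ⟨⟨hAB, gapAB⟩, hBC, gapBC⟩
  · rw [hXi2, hXi1, hrel]
    nlinarith [mul_nonneg (by linarith : (0:ℝ) ≤ (cfA α (k+3):ℝ) - 3) hη1.le]
  · rw [hXi1, hXi0]
    linarith
end

section
/- Let n ≥ 3 and suppose a_n ≥ 2 and a_{n+1} ≥ 2. Then q_n − q_{n-1} and q_n + q_{n-1} are two successive elements of 𝔔(α). -/
open Filter Real Set

namespace Stmt12Aux

/-- `E k = q_k α - p_k` in shifted indexing. -/
noncomputable def EE (α : ℝ) (k : ℕ) : ℝ := (cfQ α k : ℝ) * α - (cfP α k : ℝ)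

variable {α : ℝ}

lemma irr_iter (hα : Irrational α) : ∀ k, Irrational (gaussIter α k)
  | 0 => hα
  | (k+1) => by
      have h2 : Irrational (Int.fract (gaussIter α k)) := by
        unfold Int.fract
        exact (irr_iter hα k).sub_intCast _
      exact h2.inv

lemma irr_fract (hα : Irrational α) (k : ℕ) : Irrational (Int.fract (gaussIter α k)) := by
  unfold Int.fract
  exact (irr_iter hα k).sub_intCast _

lemma fract_pos (hα : Irrational α) (k : ℕ) : 0 < Int.fract (gaussIter α k) := by
  rcases lt_or_eq_of_le (Int.fract_nonneg (gaussIter α k)) with h | h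
  · exact h
  · exact absurd ⟨(0 : ℚ), by simpa using h⟩ (irr_fract hα k)

lemma gauss_gt_one (hα : Irrational α) (k : ℕ) : 1 < gaussIter α (k+1) := by
  show 1 < (Int.fract (gaussIter α k))⁻¹
  have h1 := fract_pos hα k
  have h2 := Int.fract_lt_one (gaussIter α k)
  exact (one_lt_inv_iff₀.mpr ⟨h1, h2⟩)

lemma cfA_ge_one (hα : Irrational α) (k : ℕ) : 1 ≤ cfA α (k+1) := by
  have := gauss_gt_one hα k
  rw [cfA]
  exact Int.le_floor.2 (by exact_mod_cast this.le)

lemma EE_rec (k : ℕ) : EE α (k+2) = (cfA α (k+1) : ℝ) * EE α (k+1) + EE α k := by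
  simp only [EE, cfQ, cfP]
  push_cast
  ring

lemma floor_zero (h0 : 0 < α) (h1 : α < 1) : ⌊α⌋ = 0 :=
  Int.floor_eq_zero_iff.2 ⟨h0.le, h1⟩

lemma EE_zero : EE α 0 = -1 := by simp [EE, cfQ, cfP]

lemma EE_one (h0 : 0 < α) (h1 : α < 1) : EE α 1 = α := by
  simp [EE, cfQ, cfP, floor_zero h0 h1]

lemma EE_succ (hα : Irrational α) (h0 : 0 < α) (h1 : α < 1) :
    ∀ k, EE α (k+1) = -Int.fract (gaussIter α k) * EE α k
  | 0 => by
      have : Int.fract (gaussIter α 0) = α := by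
        show Int.fract α = α
        rw [Int.fract, floor_zero h0 h1]; simp
      rw [this, EE_zero, EE_one h0 h1]; ring
  | (k+1) => by
      have ih := EE_succ hα h0 h1 k
      have hf : Int.fract (gaussIter α k) ≠ 0 := (fract_pos hα k).ne'
      have hrec := EE_rec (α := α) k
      have hA : (cfA α (k+1) : ℝ) = (⌊gaussIter α (k+1)⌋ : ℝ) := by rw [cfA]
      have hg : gaussIter α (k+1) = (Int.fract (gaussIter α k))⁻¹ := rfl
      have hfr : Int.fract (gaussIter α (k+1)) =
          (Int.fract (gaussIter α k))⁻¹ - (⌊gaussIter α (k+1)⌋ : ℝ) := by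
        rw [Int.fract, hg]
      rw [hrec, hfr, hA, ih]
      field_simp
      ring

lemma EE_ne (hα : Irrational α) (h0 : 0 < α) (h1 : α < 1) : ∀ k, EE α k ≠ 0
  | 0 => by rw [EE_zero]; norm_num
  | (k+1) => by
      rw [EE_succ hα h0 h1 k]
      exact mul_ne_zero (neg_ne_zero.2 (fract_pos hα k).ne') (EE_ne hα h0 h1 k)

lemma EE_alt (hα : Irrational α) (h0 : 0 < α) (h1 : α < 1) (k : ℕ) :
    EE α (k+1) * EE α k < 0 := by
  rw [EE_succ hα h0 h1 k]
  have hf := fract_pos hα k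
  have hE := EE_ne hα h0 h1 k
  have h2 : 0 < EE α k * EE α k := mul_self_pos.2 hE
  nlinarith

lemma absEE_pos (hα : Irrational α) (h0 : 0 < α) (h1 : α < 1) (k : ℕ) :
    0 < |EE α k| := abs_pos.2 (EE_ne hα h0 h1 k)

lemma absEE_lt (hα : Irrational α) (h0 : 0 < α) (h1 : α < 1) (k : ℕ) :
    |EE α (k+1)| < |EE α k| := by
  rw [EE_succ hα h0 h1 k, abs_mul, abs_neg, abs_of_pos (fract_pos hα k)]
  have h2 := Int.fract_lt_one (gaussIter α k)
  have h3 := absEE_pos hα h0 h1 k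
  nlinarith

lemma absEE_rec (hα : Irrational α) (h0 : 0 < α) (h1 : α < 1) (k : ℕ) :
    |EE α k| = (cfA α (k+1) : ℝ) * |EE α (k+1)| + |EE α (k+2)| := by
  have h1' := EE_alt hα h0 h1 k
  have h2' := EE_alt hα h0 h1 (k+1)
  have hrec := EE_rec (α := α) k
  rcases lt_or_gt_of_ne (EE_ne hα h0 h1 k) with hk | hk
  · have hk1 : 0 < EE α (k+1) := by nlinarith
    have hk2 : EE α (k+2) < 0 := by nlinarith
    rw [abs_of_neg hk, abs_of_pos hk1, abs_of_neg hk2]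
    linarith
  · have hk1 : EE α (k+1) < 0 := by nlinarith
    have hk2 : 0 < EE α (k+2) := by nlinarith
    rw [abs_of_pos hk, abs_of_neg hk1, abs_of_pos hk2]
    linarith

lemma det_cf (k : ℕ) : cfP α (k+1) * cfQ α k - cfP α k * cfQ α (k+1) = (-1)^(k+1) := by
  induction k with
  | zero => simp [cfP, cfQ]
  | succ k ih =>
      rw [show cfP α (k+1+1) = cfA α (k+1) * cfP α (k+1) + cfP α k from rfl,
        show cfQ α (k+1+1) = cfA α (k+1) * cfQ α (k+1) + cfQ α k from rfl,
        pow_succ]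
      linarith [ih]

lemma Q_pair (hα : Irrational α) : ∀ k, 0 ≤ cfQ α k ∧ 1 ≤ cfQ α (k+1)
  | 0 => by simp [cfQ]
  | (k+1) => by
      obtain ⟨h1', h2'⟩ := Q_pair hα k
      refine ⟨by linarith, ?_⟩
      show 1 ≤ cfA α (k+1) * cfQ α (k+1) + cfQ α k
      have := cfA_ge_one hα k
      nlinarith

lemma Q_step (hα : Irrational α) (k : ℕ) : cfQ α (k+1) ≤ cfQ α (k+2) := by
  obtain ⟨h1', h2'⟩ := Q_pair hα k
  show cfQ α (k+1) ≤ cfA α (k+1) * cfQ α (k+1) + cfQ α k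
  have := cfA_ge_one hα k
  nlinarith

lemma Q_mono (hα : Irrational α) (j k : ℕ) (h : j ≤ k) : cfQ α (j+1) ≤ cfQ α (k+1) := by
  induction k with
  | zero => simp_all
  | succ k ih =>
      rcases Nat.lt_or_ge j (k+1) with h' | h'
      · exact le_trans (ih (by omega)) (Q_step hα k)
      · have : j = k + 1 := by omega
        subst this; rfl

lemma P_one (h0 : 0 < α) (h1 : α < 1) : cfP α 1 = 0 := by
  simp [cfP, floor_zero h0 h1]

lemma P_two (h0 : 0 < α) (h1 : α < 1) : cfP α 2 = 1 := by
  show cfA α 1 * cfP α 1 + cfP α 0 = 1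
  rw [P_one h0 h1]; simp [cfP]

lemma witness_adm (hα : Irrational α) (h0 : 0 < α) (h1 : α < 1) (j : ℕ) :
    ¬((2:ℤ) = cfNum α j ∧ (1:ℤ) = cfDen α j) := by
  rintro ⟨hp, hq⟩
  match j with
  | 0 =>
      rw [show cfNum α 0 = cfP α 1 from rfl, P_one h0 h1] at hp
      norm_num at hp
  | 1 =>
      rw [show cfNum α 1 = cfP α 2 from rfl, P_two h0 h1] at hp
      norm_num at hp
  | (k+2) =>
      rw [show cfDen α (k+2) = cfQ α (k+3) from rfl] at hq
      have h3 : (2:ℤ) ≤ cfQ α 3 := by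
        show 2 ≤ cfA α 2 * cfQ α 2 + cfQ α 1
        have := cfA_ge_one hα 1
        have := (Q_pair hα 1).2
        show 2 ≤ cfA α 2 * cfQ α 2 + 1
        nlinarith
      have h4 : cfQ α 3 ≤ cfQ α (k+3) := Q_mono hα 2 (k+2) (by omega)
      omega

end Stmt12Aux

set_option maxHeartbeats 2000000 in
open Stmt12Aux in
/-- Let `α ∈ (0,1)` be irrational, `n ≥ 3`, `aₙ ≥ 2` and `a_{n+1} ≥ 2`.
Then `qₙ − q_{n-1}` and `qₙ + q_{n-1}` are two successive elements of `𝔔(α)`. -/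
theorem stmt12 (α : ℝ) (hα : Irrational α) (h0 : 0 < α) (h1 : α < 1)
    (n : ℕ) (hn : 3 ≤ n) (ha : 2 ≤ cfA α n) (ha' : 2 ≤ cfA α (n + 1)) :
    SuccessiveIn (QSet α)
      [cfDen α n - cfDen α (n - 1), cfDen α n + cfDen α (n - 1)] := by
  obtain ⟨m, rfl⟩ : ∃ m, n = m + 3 := ⟨n - 3, by omega⟩
  have ha4 : 2 ≤ cfA α (m+4) := by rwa [show m+3+1 = m+4 from by omega] at ha'
  have ha3 : 2 ≤ cfA α (m+3) := ha
  clear ha ha' hn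
  show SuccessiveIn (QSet α) [cfQ α (m+4) - cfQ α (m+3), cfQ α (m+4) + cfQ α (m+3)]
  -- integer facts
  have hQ2 : (1:ℤ) ≤ cfQ α (m+2) := (Q_pair hα (m+1)).2
  have hQ3 : (1:ℤ) ≤ cfQ α (m+3) := (Q_pair hα (m+2)).2
  have hQ4 : (1:ℤ) ≤ cfQ α (m+4) := (Q_pair hα (m+3)).2
  have hQ34 : cfQ α (m+3) ≤ cfQ α (m+4) := Q_step hα (m+2)
  have hDD : 2 * cfQ α (m+3) + 1 ≤ cfQ α (m+4) := by
    have h := show cfQ α (m+4) = cfA α (m+3) * cfQ α (m+3) + cfQ α (m+2) from rfl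
    nlinarith
  have hD5 : 2 * cfQ α (m+4) + 1 ≤ cfQ α (m+5) := by
    have h := show cfQ α (m+5) = cfA α (m+4) * cfQ α (m+4) + cfQ α (m+3) from rfl
    nlinarith
  set m₁ : ℤ := cfQ α (m+4) - cfQ α (m+3) with hm1_def
  set m₂ : ℤ := cfQ α (m+4) + cfQ α (m+3) with hm2_def
  have hm1pos : 2 ≤ m₁ := by omega
  have hm12 : m₁ < m₂ := by omega
  -- real facts
  have haR : 0 < |EE α (m+3)| := absEE_pos hα h0 h1 (m+3)
  have hbR : 0 < |EE α (m+4)| := absEE_pos hα h0 h1 (m+4)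
  have hba : |EE α (m+4)| < |EE α (m+3)| := by
    have h := absEE_lt hα h0 h1 (m+3)
    rwa [show m+3+1 = m+4 from by omega] at h
  have h2b : 2 * |EE α (m+4)| ≤ |EE α (m+3)| := by
    have h := absEE_rec hα h0 h1 (m+3)
    rw [show m+3+1 = m+4 from by omega, show m+3+2 = m+5 from by omega] at h
    have h5 : (0:ℝ) ≤ |EE α (m+5)| := abs_nonneg _
    have hc : (2:ℝ) ≤ (cfA α (m+4) : ℝ) := by exact_mod_cast ha4
    nlinarith
  have hsign : EE α (m+4) * EE α (m+3) < 0 := by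
    have h := EE_alt hα h0 h1 (m+3)
    rwa [show m+3+1 = m+4 from by omega] at h
  set A : ℝ := |EE α (m+3)| with hA_def
  set B : ℝ := |EE α (m+4)| with hB_def
  have habs : ∀ u v : ℤ, |(u:ℝ) * EE α (m+3) + (v:ℝ) * EE α (m+4)|
      = |(u:ℝ) * A - (v:ℝ) * B| := by
    intro u v
    rw [hA_def, hB_def]
    rcases lt_or_gt_of_ne (EE_ne hα h0 h1 (m+3)) with h3 | h3
    · have h4 : 0 < EE α (m+4) := by nlinarith
      rw [abs_of_neg h3, abs_of_pos h4,
        show (u:ℝ) * EE α (m+3) + (v:ℝ) * EE α (m+4)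
          = -((u:ℝ) * -EE α (m+3) - (v:ℝ) * EE α (m+4)) from by ring, abs_neg]
    · have h4 : EE α (m+4) < 0 := by nlinarith
      rw [abs_of_pos h3, abs_of_neg h4]
      congr 1
      ring
  -- THE KEY LEMMA
  have key : ∀ p q : ℤ, 1 ≤ q → q < m₂ →
      (∀ j : ℕ, ¬(p = cfNum α j ∧ q = cfDen α j)) →
      A + B ≤ |(q:ℝ) * α - (p:ℝ)| ∧
        (q ≠ m₁ → A + 2 * B ≤ |(q:ℝ) * α - (p:ℝ)|) := by
    intro p q hq1 hq2 hex
    set d : ℤ := (-1)^(m+4) with hd_def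
    have hdet : cfP α (m+4) * cfQ α (m+3) - cfP α (m+3) * cfQ α (m+4) = d := by
      have h := det_cf (α := α) (m+3)
      rwa [show m+3+1 = m+4 from by omega] at h
    have hdd : d * d = 1 := by
      rw [hd_def, ← pow_add]
      exact Even.neg_one_pow ⟨m+4, by ring⟩
    obtain ⟨u, v, hqu, hpu⟩ :
        ∃ u v : ℤ, u * cfQ α (m+3) + v * cfQ α (m+4) = q ∧
          u * cfP α (m+3) + v * cfP α (m+4) = p :=
      ⟨d * (cfP α (m+4) * q - cfQ α (m+4) * p),
       d * (cfQ α (m+3) * p - cfP α (m+3) * q),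
       by linear_combination (d*q) * hdet + q * hdd,
       by linear_combination (d*p) * hdet + p * hdd⟩
    have hval : (q:ℝ) * α - (p:ℝ) = (u:ℝ) * EE α (m+3) + (v:ℝ) * EE α (m+4) := by
      rw [← hqu, ← hpu]
      simp only [EE]
      push_cast
      ring
    rw [hval, habs u v]
    rcases lt_trichotomy v 0 with hv | hv | hv
    · -- v ≤ -1 forces u ≥ 2
      have hv1 : v ≤ -1 := by omega
      have hu2 : 2 ≤ u := by
        by_contra hcon
        push_neg at hcon
        have h1' : u * cfQ α (m+3) ≤ 1 * cfQ α (m+3) :=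
          mul_le_mul_of_nonneg_right (by omega) (by omega)
        have h2' : v * cfQ α (m+4) ≤ (-1) * cfQ α (m+4) :=
          mul_le_mul_of_nonneg_right hv1 (by omega)
        linarith
      have huR : (2:ℝ) ≤ (u:ℝ) := by exact_mod_cast hu2
      have hvR : (v:ℝ) ≤ -1 := by exact_mod_cast hv1
      have hx : 2 * A + B ≤ (u:ℝ) * A - (v:ℝ) * B := by
        nlinarith [mul_nonneg (by linarith : (0:ℝ) ≤ (u:ℝ) - 2) haR.le,
          mul_nonneg (by linarith : (0:ℝ) ≤ -1 - (v:ℝ)) hbR.le]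
      have hax := le_abs_self ((u:ℝ) * A - (v:ℝ) * B)
      exact ⟨by linarith, fun _ => by linarith⟩
    · -- v = 0
      subst hv
      have hu1 : 1 ≤ u := by
        by_contra hcon
        push_neg at hcon
        have h1' : u * cfQ α (m+3) ≤ 0 * cfQ α (m+3) :=
          mul_le_mul_of_nonneg_right (by omega) (by omega)
        linarith
      simp only [zero_mul, add_zero] at hqu hpu
      rcases eq_or_lt_of_le hu1 with heq | hlt
      · exfalso
        rw [← heq, one_mul] at hqu hpu
        exact hex (m+2) ⟨hpu.symm, hqu.symm⟩
      · have hu2 : 2 ≤ u := hlt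
        have huR : (2:ℝ) ≤ (u:ℝ) := by exact_mod_cast hu2
        have hx : 2 * A ≤ (u:ℝ) * A - ((0:ℤ):ℝ) * B := by
          push_cast
          nlinarith [mul_nonneg (by linarith : (0:ℝ) ≤ (u:ℝ) - 2) haR.le]
        have hax := le_abs_self ((u:ℝ) * A - ((0:ℤ):ℝ) * B)
        exact ⟨by linarith, fun _ => by linarith⟩
    · -- v ≥ 1
      have hv1 : 1 ≤ v := hv
      rcases lt_trichotomy u 0 with hu | hu | hu
      · -- u ≤ -1
        have hu1 : u ≤ -1 := by omega
        have hvR : (1:ℝ) ≤ (v:ℝ) := by exact_mod_cast hv1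
        have huR : (u:ℝ) ≤ -1 := by exact_mod_cast hu1
        have hax := neg_abs_le ((u:ℝ) * A - (v:ℝ) * B)
        constructor
        · have hx : A + B ≤
              -((u:ℝ) * A - (v:ℝ) * B) := by
            nlinarith [mul_nonneg (by linarith : (0:ℝ) ≤ -1 - (u:ℝ)) haR.le,
              mul_nonneg (by linarith : (0:ℝ) ≤ (v:ℝ) - 1) hbR.le]
          linarith
        · intro hqm1
          have hsplit : u ≤ -2 ∨ 2 ≤ v := by
            by_contra hcon
            push_neg at hcon
            obtain ⟨hc1, hc2⟩ := hcon
            have hu' : u = -1 := by omega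
            have hv' : v = 1 := by omega
            rw [hu', hv'] at hqu
            apply hqm1
            omega
          rcases hsplit with h | h
          · have huR2 : (u:ℝ) ≤ -2 := by exact_mod_cast h
            have hx : A + 2 * B ≤
                -((u:ℝ) * A - (v:ℝ) * B) := by
              nlinarith [mul_nonneg (by linarith : (0:ℝ) ≤ -2 - (u:ℝ)) haR.le,
                mul_nonneg (by linarith : (0:ℝ) ≤ (v:ℝ) - 1) hbR.le]
            linarith
          · have hvR2 : (2:ℝ) ≤ (v:ℝ) := by exact_mod_cast h
            have hx : A + 2 * B ≤
                -((u:ℝ) * A - (v:ℝ) * B) := by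
              nlinarith [mul_nonneg (by linarith : (0:ℝ) ≤ -1 - (u:ℝ)) haR.le,
                mul_nonneg (by linarith : (0:ℝ) ≤ (v:ℝ) - 2) hbR.le]
            linarith
      · -- u = 0 : forces (p,q) convergent, contradiction
        exfalso
        rw [hu] at hqu hpu
        simp only [zero_mul, zero_add] at hqu hpu
        have hv2 : v = 1 := by
          by_contra hcon
          have hv2' : 2 ≤ v := by omega
          have h1' : 2 * cfQ α (m+4) ≤ v * cfQ α (m+4) :=
            mul_le_mul_of_nonneg_right hv2' (by omega)
          linarith
        rw [hv2, one_mul] at hqu hpu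
        exact hex (m+3) ⟨hpu.symm, hqu.symm⟩
      · -- u ≥ 1 : q too big
        exfalso
        have h1' : 1 * cfQ α (m+3) ≤ u * cfQ α (m+3) :=
          mul_le_mul_of_nonneg_right (by omega) (by omega)
        have h2' : 1 * cfQ α (m+4) ≤ v * cfQ α (m+4) :=
          mul_le_mul_of_nonneg_right hv1 (by omega)
        linarith

  -- psi2Fn API
  have hbdd : ∀ t : ℝ, BddBelow {x : ℝ | ∃ p q : ℤ, 1 ≤ q ∧ (q:ℝ) ≤ t ∧
      (∀ j : ℕ, ¬(p = cfNum α j ∧ q = cfDen α j)) ∧ x = |(q:ℝ) * α - (p:ℝ)|} := by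
    intro t
    refine ⟨0, ?_⟩
    rintro x ⟨p, q, -, -, -, rfl⟩
    exact abs_nonneg _
  have hmem : ∀ (p q : ℤ) (t : ℝ), 1 ≤ q → (q:ℝ) ≤ t →
      (∀ j : ℕ, ¬(p = cfNum α j ∧ q = cfDen α j)) →
      psi2Fn α t ≤ |(q:ℝ) * α - (p:ℝ)| := by
    intro p q t h1' h2' h3'
    exact csInf_le (hbdd t) ⟨p, q, h1', h2', h3', rfl⟩
  have hlb : ∀ (t : ℝ) (c : ℝ), 1 ≤ t →
      (∀ p q : ℤ, 1 ≤ q → (q:ℝ) ≤ t →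
        (∀ j : ℕ, ¬(p = cfNum α j ∧ q = cfDen α j)) → c ≤ |(q:ℝ) * α - (p:ℝ)|) →
      c ≤ psi2Fn α t := by
    intro t c ht hc
    apply le_csInf
    · exact ⟨|((1:ℤ):ℝ) * α - ((2:ℤ):ℝ)|, 2, 1, le_refl _, by push_cast; exact ht,
        fun j => witness_adm hα h0 h1 j, rfl⟩
    · rintro x ⟨p, q, h1', h2', h3', rfl⟩
      exact hc p q h1' h2' h3'
  -- no convergent denominator equals m₁ or m₂
  have hm1ne : ∀ k : ℕ, cfDen α k ≠ m₁ := by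
    intro k
    show cfQ α (k+1) ≠ m₁
    rcases le_or_gt (k+1) (m+3) with h | h
    · have h2' : cfQ α (k+1) ≤ cfQ α (m+3) := Q_mono hα k (m+2) (by omega)
      omega
    · have h2' : cfQ α (m+4) ≤ cfQ α (k+1) := Q_mono hα (m+3) k (by omega)
      omega
  have hm2ne : ∀ k : ℕ, cfDen α k ≠ m₂ := by
    intro k
    show cfQ α (k+1) ≠ m₂
    rcases le_or_gt (k+1) (m+4) with h | h
    · have h2' : cfQ α (k+1) ≤ cfQ α (m+4) := Q_mono hα k (m+3) (by omega)
      omega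
    · have h2' : cfQ α (m+5) ≤ cfQ α (k+1) := Q_mono hα (m+4) k (by omega)
      omega
  -- the value of the special pairs
  have hm1val : |((m₁:ℤ):ℝ) * α - ((cfP α (m+4) - cfP α (m+3) : ℤ):ℝ)| = A + B := by
    have h1' : ((m₁:ℤ):ℝ) * α - ((cfP α (m+4) - cfP α (m+3) : ℤ):ℝ)
        = ((-1:ℤ):ℝ) * EE α (m+3) + ((1:ℤ):ℝ) * EE α (m+4) := by
      rw [hm1_def]
      simp only [EE]
      push_cast
      ring
    rw [h1', habs (-1) 1]
    push_cast
    rw [show (-1:ℝ) * A - 1 * B = -(A + B) from by ring, abs_neg,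
      abs_of_pos (by linarith : (0:ℝ) < A + B)]
  have hm2val : |((m₂:ℤ):ℝ) * α - ((cfP α (m+4) + cfP α (m+3) : ℤ):ℝ)| = A - B := by
    have h1' : ((m₂:ℤ):ℝ) * α - ((cfP α (m+4) + cfP α (m+3) : ℤ):ℝ)
        = ((1:ℤ):ℝ) * EE α (m+3) + ((1:ℤ):ℝ) * EE α (m+4) := by
      rw [hm2_def]
      simp only [EE]
      push_cast
      ring
    rw [h1', habs 1 1]
    push_cast
    rw [show (1:ℝ) * A - 1 * B = A - B from by ring,
      abs_of_pos (by linarith : (0:ℝ) < A - B)]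
  -- psi2Fn is constant equal to A + B on [m₁, m₂)
  have hpsival : ∀ t : ℝ, ((m₁:ℤ):ℝ) ≤ t → t < ((m₂:ℤ):ℝ) → psi2Fn α t = A + B := by
    intro t ht1 ht2
    have ht0 : (1:ℝ) ≤ t := by
      have : ((1:ℤ):ℝ) ≤ ((m₁:ℤ):ℝ) := by exact_mod_cast (by omega : (1:ℤ) ≤ m₁)
      push_cast at this
      linarith
    apply le_antisymm
    · have hh := hmem (cfP α (m+4) - cfP α (m+3)) m₁ t (by omega) ht1
        (fun j hj => hm1ne j hj.2.symm)
      rwa [hm1val] at hh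
    · apply hlb t (A + B) ht0
      intro p q h1' h2' h3'
      have hq2 : q < m₂ := by exact_mod_cast lt_of_le_of_lt h2' ht2
      exact (key p q h1' hq2 h3').1
  -- discontinuity criterion
  have hnotcont : ∀ (M : ℤ) (c : ℝ), 2 ≤ M → psi2Fn α ((M:ℤ):ℝ) < c →
      (∀ t : ℝ, ((M:ℤ):ℝ) - 1 ≤ t → t < ((M:ℤ):ℝ) → c ≤ psi2Fn α t) →
      ¬ ContinuousAt (psi2Fn α) ((M:ℤ):ℝ) := by
    intro M c hM hlt hb' hcont
    have htend : Filter.Tendsto (psi2Fn α)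
        (nhdsWithin ((M:ℤ):ℝ) (Set.Iio ((M:ℤ):ℝ))) (nhds (psi2Fn α ((M:ℤ):ℝ))) :=
      (hcont.continuousWithinAt).tendsto
    have hev : ∀ᶠ t in nhdsWithin ((M:ℤ):ℝ) (Set.Iio ((M:ℤ):ℝ)), c ≤ psi2Fn α t := by
      filter_upwards [Ioo_mem_nhdsLT_of_mem
        (Set.right_mem_Ioc.2 (by linarith : ((M:ℤ):ℝ) - 1 < ((M:ℤ):ℝ)))] with t ht
      exact hb' t ht.1.le ht.2
    have := ge_of_tendsto htend hev
    linarith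
  -- m₁ ∈ QSet
  have hQm1 : m₁ ∈ QSet α := by
    refine ⟨by omega, ?_⟩
    apply hnotcont m₁ (A + 2*B) hm1pos
    · rw [hpsival ((m₁:ℤ):ℝ) (le_refl _) (by exact_mod_cast hm12)]
      linarith
    · intro t ht1 ht2
      have ht0 : (1:ℝ) ≤ t := by
        have : ((2:ℤ):ℝ) ≤ ((m₁:ℤ):ℝ) := by exact_mod_cast hm1pos
        push_cast at this
        linarith
      apply hlb t (A + 2*B) ht0
      intro p q h1' h2' h3'
      have hq2 : q < m₁ := by exact_mod_cast lt_of_le_of_lt h2' ht2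
      exact (key p q h1' (by omega) h3').2 (by omega)
  -- m₂ ∈ QSet
  have hQm2 : m₂ ∈ QSet α := by
    refine ⟨by omega, ?_⟩
    apply hnotcont m₂ (A + B) (by omega)
    · have hle := hmem (cfP α (m+4) + cfP α (m+3)) m₂ ((m₂:ℤ):ℝ) (by omega) (le_refl _)
        (fun j hj => hm2ne j hj.2.symm)
      rw [hm2val] at hle
      linarith
    · intro t ht1 ht2
      have ht0 : (1:ℝ) ≤ t := by
        have : ((2:ℤ):ℝ) ≤ ((m₂:ℤ):ℝ) := by exact_mod_cast (by omega : (2:ℤ) ≤ m₂)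
        push_cast at this
        linarith
      apply hlb t (A + B) ht0
      intro p q h1' h2' h3'
      have hq2 : q < m₂ := by exact_mod_cast lt_of_le_of_lt h2' ht2
      exact (key p q h1' hq2 h3').1
  -- nothing in QSet strictly between
  have hbetween : ∀ z : ℤ, z ∈ QSet α → ¬(m₁ < z ∧ z < m₂) := by
    rintro z ⟨-, hz⟩ ⟨hz1, hz2⟩
    apply hz
    have hm1z : ((m₁:ℤ):ℝ) ≤ (z:ℝ) - 1 := by
      have : ((m₁:ℤ):ℝ) ≤ ((z - 1 : ℤ):ℝ) := by exact_mod_cast (by omega : m₁ ≤ z - 1)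
      push_cast at this
      linarith
    have hzm2 : ((z:ℤ):ℝ) + 1 ≤ ((m₂:ℤ):ℝ) := by
      have : ((z + 1 : ℤ):ℝ) ≤ ((m₂:ℤ):ℝ) := by exact_mod_cast (by omega : z + 1 ≤ m₂)
      push_cast at this
      linarith
    have hev : psi2Fn α =ᶠ[nhds ((z:ℤ):ℝ)] fun _ => A + B := by
      have hIoo : Set.Ioo ((z:ℝ) - 1) ((z:ℝ) + 1) ∈ nhds ((z:ℤ):ℝ) :=
        Ioo_mem_nhds (by linarith) (by linarith)
      filter_upwards [hIoo] with t ht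
      exact hpsival t (by linarith [ht.1]) (by linarith [ht.2])
    exact hev.continuousAt
  -- assemble
  constructor
  · intro x hx
    simp only [List.mem_cons, List.mem_singleton, List.not_mem_nil, or_false] at hx
    rcases hx with rfl | rfl
    · exact hQm1
    · exact hQm2
  · refine List.isChain_pair.2 ⟨hm12, ?_⟩
    intro z hzQ
    exact hbetween z hzQ
end

section
/- Let n ≥ 3 and suppose a_n ≥ 2 and a_{n+1} = 1. Then q_n − q_{n-1} and 2q_{n-1} + q_n are two successive elements of 𝔔(α). -/
open Filter Real Set

-- auxiliary
lemma st13_fract_irr {x : ℝ} (h : Irrational x) : Irrational (Int.fract x) := by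
  unfold Int.fract; exact h.sub_intCast _

lemma st13_fract_pos {x : ℝ} (h : Irrational x) : 0 < Int.fract x := by
  rcases (Int.fract_nonneg x).lt_or_eq with h' | h'
  · exact h'
  · exact absurd ⟨0, by norm_num [← h']⟩ (st13_fract_irr h)

lemma st13_irr_gaussIter {α : ℝ} (hα : Irrational α) : ∀ k, Irrational (gaussIter α k)
  | 0 => hα
  | (k+1) => (st13_fract_irr (st13_irr_gaussIter hα k)).inv

lemma st13_one_lt_gaussIter {α : ℝ} (hα : Irrational α) (k : ℕ) :
    1 < gaussIter α (k+1) := by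
  have h1 := st13_fract_pos (st13_irr_gaussIter hα k)
  have h2 := Int.fract_lt_one (gaussIter α k)
  show 1 < (Int.fract (gaussIter α k))⁻¹
  exact one_lt_inv₀ h1 |>.mpr h2

lemma st13_cfA_pos {α : ℝ} (hα : Irrational α) (k : ℕ) : 1 ≤ cfA α (k+1) := by
  have := st13_one_lt_gaussIter hα k
  exact Int.le_floor.mpr (by exact_mod_cast this.le)

lemma st13_D_formula {α : ℝ} (hα : Irrational α) : ∀ m : ℕ,
    (cfQ α m : ℝ) * α - (cfP α m : ℝ)
      = (-1) ^ (m + 1) * ∏ k ∈ Finset.range m, Int.fract (gaussIter α k) := by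
  intro m
  induction m using Nat.strong_induction_on with
  | _ m ih =>
    match m with
    | 0 => simp [cfQ, cfP]
    | 1 =>
      show ((1:ℤ):ℝ) * α - ((⌊α⌋:ℤ):ℝ) = (-1)^2 * ∏ k ∈ Finset.range 1, Int.fract (gaussIter α k)
      rw [Finset.prod_range_one]
      show _ = (-1)^2 * Int.fract α
      rw [Int.fract]
      push_cast; ring
    | (m+2) =>
      have ih1 := ih (m+1) (by omega)
      have ih0 := ih m (by omega)
      have ht : Int.fract (gaussIter α m) ≠ 0 :=
        ne_of_gt (st13_fract_pos (st13_irr_gaussIter hα m))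
      have hfr : Int.fract (gaussIter α (m+1))
          = (Int.fract (gaussIter α m))⁻¹ - (cfA α (m+1) : ℝ) := rfl
      have key : (cfQ α (m+2) : ℝ) * α - (cfP α (m+2) : ℝ)
          = (cfA α (m+1) : ℝ) * ((cfQ α (m+1) : ℝ) * α - cfP α (m+1))
            + ((cfQ α m : ℝ) * α - cfP α m) := by
        show ((cfA α (m+1) * cfQ α (m+1) + cfQ α m : ℤ) : ℝ) * α
            - ((cfA α (m+1) * cfP α (m+1) + cfP α m : ℤ) : ℝ) = _
        push_cast; ring
      rw [key, ih1, ih0, Finset.prod_range_succ, Finset.prod_range_succ, hfr]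
      rw [Finset.prod_range_succ]
      field_simp
      ring

lemma st13_sign_abs {α : ℝ} (hα : Irrational α) (j : ℕ) :
    cfXi α j = ∏ k ∈ Finset.range (j+1), Int.fract (gaussIter α k) := by
  have h := st13_D_formula hα (j+1)
  have hpos : 0 < ∏ k ∈ Finset.range (j+1), Int.fract (gaussIter α k) :=
    Finset.prod_pos fun k _ => st13_fract_pos (st13_irr_gaussIter hα k)
  unfold cfXi cfDen cfNum
  rw [h, abs_mul, abs_pow, abs_neg, abs_one, one_pow, one_mul, abs_of_pos hpos]

lemma st13_xi_pos {α : ℝ} (hα : Irrational α) (j : ℕ) : 0 < cfXi α j := by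
  rw [st13_sign_abs hα]
  exact Finset.prod_pos fun k _ => st13_fract_pos (st13_irr_gaussIter hα k)

lemma st13_xi_lt {α : ℝ} (hα : Irrational α) (j : ℕ) : cfXi α (j+1) < cfXi α j := by
  rw [st13_sign_abs hα, st13_sign_abs hα, Finset.prod_range_succ]
  have hpos : 0 < ∏ k ∈ Finset.range (j+1), Int.fract (gaussIter α k) :=
    Finset.prod_pos fun k _ => st13_fract_pos (st13_irr_gaussIter hα k)
  nlinarith [Int.fract_lt_one (gaussIter α (j+1)),
    st13_fract_pos (st13_irr_gaussIter hα (j+1))]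

/-- signed value: `q_j α - p_j = (-1)^j ξ_j`. -/
lemma st13_signD {α : ℝ} (hα : Irrational α) (j : ℕ) :
    (cfDen α j : ℝ) * α - (cfNum α j : ℝ) = (-1) ^ j * cfXi α j := by
  have h := st13_D_formula hα (j+1)
  unfold cfDen cfNum
  rw [h, st13_sign_abs hα]
  ring

/-- recurrence `ξ_j = a_{j+2} ξ_{j+1} + ξ_{j+2}`. -/
lemma st13_xi_rec {α : ℝ} (hα : Irrational α) (j : ℕ) :
    cfXi α j = (cfA α (j+2) : ℝ) * cfXi α (j+1) + cfXi α (j+2) := by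
  have key : (cfDen α (j+2) : ℝ) * α - (cfNum α (j+2) : ℝ)
      = (cfA α (j+2) : ℝ) * ((cfDen α (j+1) : ℝ) * α - cfNum α (j+1))
        + ((cfDen α j : ℝ) * α - cfNum α j) := by
    show ((cfA α (j+2) * cfQ α (j+2) + cfQ α (j+1) : ℤ) : ℝ) * α
        - ((cfA α (j+2) * cfP α (j+2) + cfP α (j+1) : ℤ) : ℝ) = _
    push_cast
    unfold cfDen cfNum
    ring
  rw [st13_signD hα, st13_signD hα, st13_signD hα] at key
  have he : ((-1:ℝ)^j) ≠ 0 := pow_ne_zero _ (by norm_num)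
  have key2 : ((-1:ℝ)^j) * (cfXi α (j+2) + (cfA α (j+2) : ℝ) * cfXi α (j+1) - cfXi α j) = 0 := by
    linear_combination key
  rcases mul_eq_zero.mp key2 with h | h
  · exact absurd h he
  · linarith

lemma st13_det_unit (α : ℝ) : ∀ j : ℕ,
    (cfP α (j+1) * cfQ α j - cfP α j * cfQ α (j+1))
      * (cfP α (j+1) * cfQ α j - cfP α j * cfQ α (j+1)) = 1
  | 0 => by simp [cfP, cfQ]
  | (j+1) => by
    have ih := st13_det_unit α j
    have hE : cfP α (j+2) * cfQ α (j+1) - cfP α (j+1) * cfQ α (j+2)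
        = -(cfP α (j+1) * cfQ α j - cfP α j * cfQ α (j+1)) := by
      show (cfA α (j+1) * cfP α (j+1) + cfP α j) * cfQ α (j+1)
          - cfP α (j+1) * (cfA α (j+1) * cfQ α (j+1) + cfQ α j) = _
      ring
    rw [hE]
    linear_combination ih

lemma st13_decomp (α : ℝ) (j : ℕ) (p q : ℤ) :
    ∃ u v : ℤ, p = u * cfP α (j+1) + v * cfP α j ∧ q = u * cfQ α (j+1) + v * cfQ α j := by
  set E := cfP α (j+1) * cfQ α j - cfP α j * cfQ α (j+1) with hEdef
  have hE : E * E = 1 := st13_det_unit α j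
  refine ⟨E * (p * cfQ α j - q * cfP α j), E * (q * cfP α (j+1) - p * cfQ α (j+1)), ?_, ?_⟩
  · linear_combination (-p) * hE
  · linear_combination (-q) * hE

lemma st13_cfQ_facts {α : ℝ} (hα : Irrational α) : ∀ k : ℕ,
    0 ≤ cfQ α k ∧ 1 ≤ cfQ α (k+1) ∧ cfQ α k ≤ cfQ α (k+1)
  | 0 => by simp [cfQ]
  | (k+1) => by
    obtain ⟨h0, h1, h2⟩ := st13_cfQ_facts hα k
    have ha := st13_cfA_pos hα k
    have hrec : cfQ α (k+2) = cfA α (k+1) * cfQ α (k+1) + cfQ α k := rfl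
    refine ⟨by linarith, ?_, ?_⟩ <;> · rw [hrec]; nlinarith

lemma st13_cfDen_mono {α : ℝ} (hα : Irrational α) : Monotone (cfDen α) := by
  apply monotone_nat_of_le_succ
  intro k
  exact (st13_cfQ_facts hα (k+1)).2.2

lemma st13_cfDen_pos {α : ℝ} (hα : Irrational α) (k : ℕ) : 1 ≤ cfDen α k :=
  (st13_cfQ_facts hα k).2.1

lemma st13_cfDen_two_le {α : ℝ} (hα : Irrational α) (k : ℕ) : 2 ≤ cfDen α (k+2) := by
  have h1 := (st13_cfQ_facts hα (k+1)).2.1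
  have h2 := (st13_cfQ_facts hα k).2.1
  have ha := st13_cfA_pos hα (k+1)
  have hrec : cfDen α (k+2) = cfA α (k+2) * cfQ α (k+2) + cfQ α (k+1) := rfl
  rw [hrec]
  nlinarith

/-- the value of a combination `u (pₙ,qₙ) + v (p_{n-1},q_{n-1})`. -/
lemma st13_pair_value {α : ℝ} (hα : Irrational α) (j : ℕ) (u v : ℤ) :
    |((u * cfDen α (j+1) + v * cfDen α j : ℤ) : ℝ) * α
      - ((u * cfNum α (j+1) + v * cfNum α j : ℤ) : ℝ)|
      = |(u : ℝ) * cfXi α (j+1) - (v : ℝ) * cfXi α j| := by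
  have h1 := st13_signD hα (j+1)
  have h0 := st13_signD hα j
  have key : ((u * cfDen α (j+1) + v * cfDen α j : ℤ) : ℝ) * α
      - ((u * cfNum α (j+1) + v * cfNum α j : ℤ) : ℝ)
      = (-1)^j * (-((u:ℝ) * cfXi α (j+1) - (v:ℝ) * cfXi α j)) := by
    push_cast
    linear_combination (u : ℝ) * h1 + (v : ℝ) * h0
  rw [key, abs_mul, abs_pow, abs_neg, abs_one, one_pow, one_mul, abs_neg]

lemma st13_cases (Q Q1 u v : ℤ) (x1 x x2 : ℝ)
    (hQ1 : 2 ≤ Q1) (hQ : 2*Q1 + 1 ≤ Q)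
    (hx2 : 0 < x2) (hxx : x2 < x) (hrel : x1 = x + x2)
    (h1 : 1 ≤ u*Q + v*Q1) (h2 : u*Q + v*Q1 ≤ Q + 2*Q1) :
    (u = 0 ∧ v = 1) ∨ (u = 1 ∧ v = 0) ∨ (u = 1 ∧ v = 1) ∨ (u = 1 ∧ v = -1) ∨ (u = 1 ∧ v = 2) ∨
      x1 + x + x2 ≤ |(u:ℝ)*x - (v:ℝ)*x1| := by
  have hx0 : 0 < x := by linarith
  have hx10 : 0 < x1 := by linarith
  rcases le_or_gt u (-1) with hu | hu
  · have hv : 3 ≤ v := by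
      by_contra hcon
      push_neg at hcon
      nlinarith [mul_nonneg (by linarith : (0:ℤ) ≤ -1 - u) (by linarith : (0:ℤ) ≤ Q),
        mul_nonneg (by linarith : (0:ℤ) ≤ 2 - v) (by linarith : (0:ℤ) ≤ Q1)]
    have hu' : (u:ℝ) ≤ -1 := by exact_mod_cast hu
    have hv' : (3:ℝ) ≤ (v:ℝ) := by exact_mod_cast hv
    refine Or.inr (Or.inr (Or.inr (Or.inr (Or.inr (le_abs.mpr (Or.inr ?_))))))
    nlinarith [mul_nonneg (by linarith : (0:ℝ) ≤ (v:ℝ) - 3) hx10.le,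
      mul_nonneg (by linarith : (0:ℝ) ≤ -1 - (u:ℝ)) hx0.le]
  rcases le_or_gt 2 u with hu2 | hu2
  · have hv : v ≤ -1 := by
      by_contra hcon
      push_neg at hcon
      nlinarith [mul_nonneg (by linarith : (0:ℤ) ≤ u - 2) (by linarith : (0:ℤ) ≤ Q),
        mul_nonneg (by linarith : (0:ℤ) ≤ v) (by linarith : (0:ℤ) ≤ Q1)]
    have hu' : (2:ℝ) ≤ (u:ℝ) := by exact_mod_cast hu2
    have hv' : (v:ℝ) ≤ -1 := by exact_mod_cast hv
    refine Or.inr (Or.inr (Or.inr (Or.inr (Or.inr (le_abs.mpr (Or.inl ?_))))))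
    nlinarith [mul_nonneg (by linarith : (0:ℝ) ≤ (u:ℝ) - 2) hx0.le,
      mul_nonneg (by linarith : (0:ℝ) ≤ -1 - (v:ℝ)) hx10.le]
  interval_cases u
  · -- u = 0
    have hv : 1 ≤ v := by
      by_contra hcon
      push_neg at hcon
      nlinarith [mul_nonneg (by linarith : (0:ℤ) ≤ -v) (by linarith : (0:ℤ) ≤ Q1)]
    rcases eq_or_lt_of_le hv with h | h
    · exact Or.inl ⟨rfl, h.symm⟩
    · have hv' : (2:ℝ) ≤ (v:ℝ) := by exact_mod_cast h
      refine Or.inr (Or.inr (Or.inr (Or.inr (Or.inr (le_abs.mpr (Or.inr ?_))))))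
      push_cast
      nlinarith [mul_nonneg (by linarith : (0:ℝ) ≤ (v:ℝ) - 2) hx10.le]
  · -- u = 1
    rcases le_or_gt v (-2) with hv | hv
    · have hv' : (v:ℝ) ≤ -2 := by exact_mod_cast hv
      refine Or.inr (Or.inr (Or.inr (Or.inr (Or.inr (le_abs.mpr (Or.inl ?_))))))
      push_cast
      nlinarith [mul_nonneg (by linarith : (0:ℝ) ≤ -2 - (v:ℝ)) hx10.le]
    rcases le_or_gt 3 v with hv3 | hv3
    · have hv' : (3:ℝ) ≤ (v:ℝ) := by exact_mod_cast hv3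
      refine Or.inr (Or.inr (Or.inr (Or.inr (Or.inr (le_abs.mpr (Or.inr ?_))))))
      push_cast
      nlinarith [mul_nonneg (by linarith : (0:ℝ) ≤ (v:ℝ) - 3) hx10.le]
    interval_cases v
    · exact Or.inr (Or.inr (Or.inr (Or.inl ⟨rfl, rfl⟩)))
    · exact Or.inr (Or.inl ⟨rfl, rfl⟩)
    · exact Or.inr (Or.inr (Or.inl ⟨rfl, rfl⟩))
    · exact Or.inr (Or.inr (Or.inr (Or.inr (Or.inl ⟨rfl, rfl⟩))))

section Classify

variable {α : ℝ} (hα : Irrational α) (m : ℕ)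
include hα

lemma st13_hQ (ha : 2 ≤ cfA α (m+3)) :
    2 * cfDen α (m+2) + 1 ≤ cfDen α (m+3) := by
  have h1 : cfDen α (m+3) = cfA α (m+3) * cfDen α (m+2) + cfDen α (m+1) := rfl
  have h2 := st13_cfDen_pos hα (m+1)
  have h3 := st13_cfDen_two_le hα m
  nlinarith

omit hα in
lemma st13_den4 (ha' : cfA α (m+4) = 1) :
    cfDen α (m+4) = cfDen α (m+3) + cfDen α (m+2) := by
  have h1 : cfDen α (m+4) = cfA α (m+4) * cfDen α (m+3) + cfDen α (m+2) := rfl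
  rw [h1, ha']; ring

omit hα in
lemma st13_num4 (ha' : cfA α (m+4) = 1) :
    cfNum α (m+4) = cfNum α (m+3) + cfNum α (m+2) := by
  have h1 : cfNum α (m+4) = cfA α (m+4) * cfNum α (m+3) + cfNum α (m+2) := rfl
  rw [h1, ha']; ring

lemma st13_den5 : cfDen α (m+4) + cfDen α (m+3) ≤ cfDen α (m+5) := by
  have h1 : cfDen α (m+5) = cfA α (m+5) * cfDen α (m+4) + cfDen α (m+3) := rfl
  have h2 := st13_cfA_pos hα (m+4)
  have h3 := st13_cfDen_pos hα (m+4)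
  nlinarith

lemma st13_xirel (ha' : cfA α (m+4) = 1) :
    cfXi α (m+2) = cfXi α (m+3) + cfXi α (m+4) := by
  have h := st13_xi_rec hα (m+2)
  rw [show m+2+2 = m+4 by omega, ha'] at h
  rw [show m+2+1 = m+3 by omega] at h
  simpa using h

lemma st13_T1_not_den (ha : 2 ≤ cfA α (m+3)) (j : ℕ) :
    cfDen α j ≠ cfDen α (m+3) - cfDen α (m+2) := by
  have hQ := st13_hQ hα m ha
  rcases le_or_gt j (m+2) with h | h
  · have h1 := st13_cfDen_mono hα h
    intro heq; omega
  · have h1 := st13_cfDen_mono hα (show m+3 ≤ j by omega)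
    have h2 := st13_cfDen_two_le hα m
    intro heq; omega

lemma st13_T2_not_den (ha : 2 ≤ cfA α (m+3)) (ha' : cfA α (m+4) = 1) (j : ℕ) :
    cfDen α j ≠ cfDen α (m+3) + 2 * cfDen α (m+2) := by
  have hQ := st13_hQ hα m ha
  have h4 := st13_den4 (α := α) m ha'
  rcases le_or_gt j (m+4) with h | h
  · have h1 := st13_cfDen_mono hα h
    have h2 := st13_cfDen_two_le hα m
    intro heq; omega
  · have h1 := st13_cfDen_mono hα (show m+5 ≤ j by omega)
    have h5 := st13_den5 hα m
    have h2 := st13_cfDen_two_le hα m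
    intro heq; omega

lemma st13_val1 :
    |((cfDen α (m+3) - cfDen α (m+2) : ℤ) : ℝ) * α - ((cfNum α (m+3) - cfNum α (m+2) : ℤ) : ℝ)|
      = cfXi α (m+2) + cfXi α (m+3) := by
  have h := st13_pair_value hα (m+2) 1 (-1)
  rw [show (1 * cfDen α (m+2+1) + (-1) * cfDen α (m+2) : ℤ)
      = cfDen α (m+3) - cfDen α (m+2) by ring,
    show (1 * cfNum α (m+2+1) + (-1) * cfNum α (m+2) : ℤ)
      = cfNum α (m+3) - cfNum α (m+2) by ring] at h
  push_cast at h ⊢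
  rw [h, show (1:ℝ) * cfXi α (m+2+1) - (-1) * cfXi α (m+2)
      = cfXi α (m+2) + cfXi α (m+3) by ring]
  have := st13_xi_pos hα (m+2); have := st13_xi_pos hα (m+3)
  exact abs_of_pos (by linarith)

lemma st13_val2 :
    |((cfDen α (m+3) + 2 * cfDen α (m+2) : ℤ) : ℝ) * α
        - ((cfNum α (m+3) + 2 * cfNum α (m+2) : ℤ) : ℝ)|
      = 2 * cfXi α (m+2) - cfXi α (m+3) := by
  have h := st13_pair_value hα (m+2) 1 2
  rw [show (1 * cfDen α (m+2+1) + 2 * cfDen α (m+2) : ℤ)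
      = cfDen α (m+3) + 2 * cfDen α (m+2) by ring,
    show (1 * cfNum α (m+2+1) + 2 * cfNum α (m+2) : ℤ)
      = cfNum α (m+3) + 2 * cfNum α (m+2) by ring] at h
  push_cast at h ⊢
  rw [h, show (1:ℝ) * cfXi α (m+2+1) - 2 * cfXi α (m+2)
      = -(2 * cfXi α (m+2) - cfXi α (m+3)) by ring, abs_neg]
  have h1 := st13_xi_lt hα (m+2)
  rw [show m+2+1 = m+3 by omega] at h1
  have h2 := st13_xi_pos hα (m+3)
  exact abs_of_pos (by linarith)

lemma st13_classify (ha : 2 ≤ cfA α (m+3)) (ha' : cfA α (m+4) = 1)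
    (p q : ℤ) (hq1 : 1 ≤ q) (hq2 : q ≤ cfDen α (m+3) + 2 * cfDen α (m+2))
    (hnc : ∀ j : ℕ, ¬(p = cfNum α j ∧ q = cfDen α j)) :
    (p = cfNum α (m+3) - cfNum α (m+2) ∧ q = cfDen α (m+3) - cfDen α (m+2)) ∨
    (p = cfNum α (m+3) + 2 * cfNum α (m+2) ∧ q = cfDen α (m+3) + 2 * cfDen α (m+2)) ∨
    cfXi α (m+2) + cfXi α (m+3) + cfXi α (m+4) ≤ |(q:ℝ) * α - (p:ℝ)| := by
  obtain ⟨u, v, hp, hq⟩ := st13_decomp α (m+3) p q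
  have hp' : p = u * cfNum α (m+3) + v * cfNum α (m+2) := hp
  have hq' : q = u * cfDen α (m+3) + v * cfDen α (m+2) := hq
  have hQ1 := st13_cfDen_two_le hα m
  have hQ := st13_hQ hα m ha
  have hx2 := st13_xi_pos hα (m+4)
  have hxx := st13_xi_lt hα (m+3)
  rw [show m+3+1 = m+4 by omega] at hxx
  have hrel := st13_xirel hα m ha'
  have h1 : 1 ≤ u * cfDen α (m+3) + v * cfDen α (m+2) := hq' ▸ hq1
  have h2 : u * cfDen α (m+3) + v * cfDen α (m+2)
      ≤ cfDen α (m+3) + 2 * cfDen α (m+2) := hq' ▸ hq2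
  rcases st13_cases (cfDen α (m+3)) (cfDen α (m+2)) u v
      (cfXi α (m+2)) (cfXi α (m+3)) (cfXi α (m+4)) hQ1 hQ hx2 hxx hrel h1 h2 with
    hc | hc | hc | hc | hc | hc
  · exact absurd ⟨by rw [hp', hc.1, hc.2]; ring, by rw [hq', hc.1, hc.2]; ring⟩ (hnc (m+2))
  · exact absurd ⟨by rw [hp', hc.1, hc.2]; ring, by rw [hq', hc.1, hc.2]; ring⟩ (hnc (m+3))
  · refine absurd ⟨?_, ?_⟩ (hnc (m+4))
    · rw [hp', hc.1, hc.2, st13_num4 (α := α) m ha']; ring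
    · rw [hq', hc.1, hc.2, st13_den4 (α := α) m ha']; ring
  · exact Or.inl ⟨by rw [hp', hc.1, hc.2]; ring, by rw [hq', hc.1, hc.2]; ring⟩
  · exact Or.inr (Or.inl ⟨by rw [hp', hc.1, hc.2]; ring, by rw [hq', hc.1, hc.2]; ring⟩)
  · refine Or.inr (Or.inr ?_)
    have hpv := st13_pair_value hα (m+2) u v
    rw [show m+2+1 = m+3 by omega] at hpv
    rw [hp', hq']
    push_cast at hpv ⊢
    rw [hpv]
    exact hc

end Classify

section Psi2

variable {α : ℝ} (hα : Irrational α)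

def st13_S (α t : ℝ) : Set ℝ :=
  {x : ℝ | ∃ p q : ℤ, 1 ≤ q ∧ (q : ℝ) ≤ t ∧
    (∀ n : ℕ, ¬(p = cfNum α n ∧ q = cfDen α n)) ∧ x = |(q : ℝ) * α - (p : ℝ)|}

lemma st13_psi2_eq (α t : ℝ) : psi2Fn α t = sInf (st13_S α t) := rfl

lemma st13_bdd (α t : ℝ) : BddBelow (st13_S α t) := by
  refine ⟨0, fun x hx => ?_⟩
  obtain ⟨p, q, _, _, _, rfl⟩ := hx
  exact abs_nonneg _

include hα in
lemma st13_nonempty (t : ℝ) (ht : 1 ≤ t) : (st13_S α t).Nonempty := by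
  refine ⟨_, |cfNum α 0| + |cfNum α 1| + 1, 1, le_refl 1, by exact_mod_cast ht, ?_, rfl⟩
  rintro j ⟨hp, hq⟩
  match j with
  | 0 =>
    have := le_abs_self (cfNum α 0)
    have := abs_nonneg (cfNum α 1)
    omega
  | 1 =>
    have := le_abs_self (cfNum α 1)
    have := abs_nonneg (cfNum α 0)
    omega
  | (k+2) =>
    have := st13_cfDen_two_le hα k
    omega

include hα in
lemma st13_eval_mid (m : ℕ) (ha : 2 ≤ cfA α (m+3)) (ha' : cfA α (m+4) = 1) (t : ℝ)
    (htl : ((cfDen α (m+3) - cfDen α (m+2) : ℤ) : ℝ) ≤ t)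
    (htr : t < ((cfDen α (m+3) + 2 * cfDen α (m+2) : ℤ) : ℝ)) :
    psi2Fn α t = cfXi α (m+2) + cfXi α (m+3) := by
  have hQ1 := st13_cfDen_two_le hα m
  have hQ := st13_hQ hα m ha
  have hmem : cfXi α (m+2) + cfXi α (m+3) ∈ st13_S α t := by
    refine ⟨cfNum α (m+3) - cfNum α (m+2), cfDen α (m+3) - cfDen α (m+2),
      by omega, htl, ?_, (st13_val1 hα m).symm⟩
    rintro j ⟨-, hqe⟩
    exact st13_T1_not_den hα m ha j hqe.symm
  rw [st13_psi2_eq]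
  apply le_antisymm (csInf_le (st13_bdd α t) hmem)
  apply le_csInf ⟨_, hmem⟩
  rintro x ⟨p, q, hq1, hq2, hnc, rfl⟩
  have hq2' : q ≤ cfDen α (m+3) + 2 * cfDen α (m+2) := by
    have h := lt_of_le_of_lt hq2 htr
    exact_mod_cast h.le
  rcases st13_classify hα m ha ha' p q hq1 hq2' hnc with ⟨hp, hq⟩ | ⟨hp, hq⟩ | h
  · subst hp; subst hq
    rw [st13_val1 hα m]
  · exfalso
    subst hq
    exact absurd (lt_of_le_of_lt hq2 htr) (lt_irrefl _)
  · have := st13_xi_pos hα (m+4)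
    linarith

include hα in
lemma st13_eval_right (m : ℕ) (ha : 2 ≤ cfA α (m+3)) (ha' : cfA α (m+4) = 1) (t : ℝ)
    (htl : ((cfDen α (m+3) + 2 * cfDen α (m+2) : ℤ) : ℝ) ≤ t)
    (htr : t < ((cfDen α (m+3) + 2 * cfDen α (m+2) : ℤ) : ℝ) + 1) :
    psi2Fn α t = 2 * cfXi α (m+2) - cfXi α (m+3) := by
  have hQ1 := st13_cfDen_two_le hα m
  have hQ := st13_hQ hα m ha
  have hrel := st13_xirel hα m ha'
  have hxx := st13_xi_lt hα (m+3)
  rw [show m+3+1 = m+4 by omega] at hxx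
  have hx2 := st13_xi_pos hα (m+4)
  have hmem : 2 * cfXi α (m+2) - cfXi α (m+3) ∈ st13_S α t := by
    refine ⟨cfNum α (m+3) + 2 * cfNum α (m+2), cfDen α (m+3) + 2 * cfDen α (m+2),
      by omega, htl, ?_, (st13_val2 hα m).symm⟩
    rintro j ⟨-, hqe⟩
    exact st13_T2_not_den hα m ha ha' j hqe.symm
  rw [st13_psi2_eq]
  apply le_antisymm (csInf_le (st13_bdd α t) hmem)
  apply le_csInf ⟨_, hmem⟩
  rintro x ⟨p, q, hq1, hq2, hnc, rfl⟩
  have hq2' : q ≤ cfDen α (m+3) + 2 * cfDen α (m+2) := by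
    have h : (q:ℝ) < ((cfDen α (m+3) + 2 * cfDen α (m+2) : ℤ) : ℝ) + 1 :=
      lt_of_le_of_lt hq2 htr
    have h2 : (q:ℝ) < (((cfDen α (m+3) + 2 * cfDen α (m+2) + 1 : ℤ)) : ℝ) := by
      push_cast at h ⊢; linarith
    have h3 : q < cfDen α (m+3) + 2 * cfDen α (m+2) + 1 := by exact_mod_cast h2
    omega
  rcases st13_classify hα m ha ha' p q hq1 hq2' hnc with ⟨hp, hq⟩ | ⟨hp, hq⟩ | h
  · subst hp; subst hq
    rw [st13_val1 hα m]
    linarith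
  · subst hp; subst hq
    rw [st13_val2 hα m]
  · linarith

include hα in
lemma st13_lb_left (m : ℕ) (ha : 2 ≤ cfA α (m+3)) (ha' : cfA α (m+4) = 1) (t : ℝ)
    (htl : 1 ≤ t) (htr : t < ((cfDen α (m+3) - cfDen α (m+2) : ℤ) : ℝ)) :
    cfXi α (m+2) + cfXi α (m+3) + cfXi α (m+4) ≤ psi2Fn α t := by
  have hQ1 := st13_cfDen_two_le hα m
  have hQ := st13_hQ hα m ha
  rw [st13_psi2_eq]
  apply le_csInf (st13_nonempty hα t htl)
  rintro x ⟨p, q, hq1, hq2, hnc, rfl⟩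
  have hqT1 : q < cfDen α (m+3) - cfDen α (m+2) := by
    exact_mod_cast lt_of_le_of_lt hq2 htr
  have hq2' : q ≤ cfDen α (m+3) + 2 * cfDen α (m+2) := by omega
  rcases st13_classify hα m ha ha' p q hq1 hq2' hnc with ⟨hp, hq⟩ | ⟨hp, hq⟩ | h
  · omega
  · omega
  · exact h

end Psi2

section Final

variable {α : ℝ} (hα : Irrational α) (m : ℕ)
include hα

lemma st13_T1_mem (ha : 2 ≤ cfA α (m+3)) (ha' : cfA α (m+4) = 1) :
    (cfDen α (m+3) - cfDen α (m+2)) ∈ QSet α := by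
  have hQ1 := st13_cfDen_two_le hα m
  have hQ := st13_hQ hα m ha
  have hx2 := st13_xi_pos hα (m+4)
  refine ⟨by omega, fun hc => ?_⟩
  have hT13r : (3:ℝ) ≤ ((cfDen α (m+3) - cfDen α (m+2) : ℤ):ℝ) := by
    exact_mod_cast (show (3:ℤ) ≤ cfDen α (m+3) - cfDen α (m+2) by omega)
  have hfT1 : psi2Fn α ((cfDen α (m+3) - cfDen α (m+2) : ℤ):ℝ)
      = cfXi α (m+2) + cfXi α (m+3) := by
    refine st13_eval_mid hα m ha ha' _ le_rfl ?_
    exact_mod_cast (show cfDen α (m+3) - cfDen α (m+2)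
      < cfDen α (m+3) + 2 * cfDen α (m+2) by omega)
  have htd := hc.tendsto
  rw [hfT1] at htd
  have hev : ∀ᶠ u in nhds ((cfDen α (m+3) - cfDen α (m+2) : ℤ):ℝ),
      psi2Fn α u < cfXi α (m+2) + cfXi α (m+3) + cfXi α (m+4) :=
    htd.eventually_lt_const (by linarith)
  rcases Metric.eventually_nhds_iff.mp hev with ⟨ε, hε, hball⟩
  obtain ⟨u, hu⟩ : ∃ u : ℝ, u = ((cfDen α (m+3) - cfDen α (m+2) : ℤ):ℝ) - min ε 1 / 2 :=
    ⟨_, rfl⟩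
  have hmin : 0 < min ε 1 := lt_min hε one_pos
  have hminl := min_le_left ε 1
  have hminr := min_le_right ε 1
  have hdist : dist u ((cfDen α (m+3) - cfDen α (m+2) : ℤ):ℝ) < ε := by
    rw [Real.dist_eq, show u - ((cfDen α (m+3) - cfDen α (m+2) : ℤ):ℝ) = -(min ε 1 / 2)
      by rw [hu]; ring, abs_neg, abs_of_pos (by linarith)]
    linarith
  have hlt := hball hdist
  have hlb := st13_lb_left hα m ha ha' u (by linarith) (by linarith)
  linarith

lemma st13_T2_mem (ha : 2 ≤ cfA α (m+3)) (ha' : cfA α (m+4) = 1) :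
    (2 * cfDen α (m+2) + cfDen α (m+3)) ∈ QSet α := by
  have hQ1 := st13_cfDen_two_le hα m
  have hQ := st13_hQ hα m ha
  have hx2 := st13_xi_pos hα (m+4)
  have hrel := st13_xirel hα m ha'
  have hxx := st13_xi_lt hα (m+3)
  rw [show m+3+1 = m+4 by omega] at hxx
  have hco : (2 * cfDen α (m+2) + cfDen α (m+3) : ℤ)
      = cfDen α (m+3) + 2 * cfDen α (m+2) := by ring
  rw [hco]
  refine ⟨by omega, fun hc => ?_⟩
  have hT12r : ((cfDen α (m+3) - cfDen α (m+2) : ℤ):ℝ) + 1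
      ≤ ((cfDen α (m+3) + 2 * cfDen α (m+2) : ℤ):ℝ) := by
    exact_mod_cast (show (cfDen α (m+3) - cfDen α (m+2)) + 1
      ≤ cfDen α (m+3) + 2 * cfDen α (m+2) by omega)
  have hfT2 : psi2Fn α ((cfDen α (m+3) + 2 * cfDen α (m+2) : ℤ):ℝ)
      = 2 * cfXi α (m+2) - cfXi α (m+3) :=
    st13_eval_right hα m ha ha' _ le_rfl (by linarith)
  have htd := hc.tendsto
  rw [hfT2] at htd
  have hev : ∀ᶠ u in nhds ((cfDen α (m+3) + 2 * cfDen α (m+2) : ℤ):ℝ),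
      psi2Fn α u < cfXi α (m+2) + cfXi α (m+3) :=
    htd.eventually_lt_const (by linarith)
  rcases Metric.eventually_nhds_iff.mp hev with ⟨ε, hε, hball⟩
  obtain ⟨u, hu⟩ : ∃ u : ℝ,
      u = ((cfDen α (m+3) + 2 * cfDen α (m+2) : ℤ):ℝ) - min ε 1 / 2 := ⟨_, rfl⟩
  have hmin : 0 < min ε 1 := lt_min hε one_pos
  have hminl := min_le_left ε 1
  have hminr := min_le_right ε 1
  have hdist : dist u ((cfDen α (m+3) + 2 * cfDen α (m+2) : ℤ):ℝ) < ε := by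
    rw [Real.dist_eq, show u - ((cfDen α (m+3) + 2 * cfDen α (m+2) : ℤ):ℝ)
      = -(min ε 1 / 2) by rw [hu]; ring, abs_neg, abs_of_pos (by linarith)]
    linarith
  have hlt := hball hdist
  have hmid := st13_eval_mid hα m ha ha' u (by linarith) (by linarith)
  rw [hmid] at hlt
  exact absurd hlt (lt_irrefl _)

lemma st13_between (ha : 2 ≤ cfA α (m+3)) (ha' : cfA α (m+4) = 1) (z : ℤ)
    (hz1 : cfDen α (m+3) - cfDen α (m+2) < z)
    (hz2 : z < cfDen α (m+3) + 2 * cfDen α (m+2)) :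
    ContinuousAt (psi2Fn α) (z : ℝ) := by
  have hev : psi2Fn α =ᶠ[nhds ((z:ℤ):ℝ)] fun _ => cfXi α (m+2) + cfXi α (m+3) := by
    have hmem : Ioo ((cfDen α (m+3) - cfDen α (m+2) : ℤ) : ℝ)
        ((cfDen α (m+3) + 2 * cfDen α (m+2) : ℤ) : ℝ) ∈ nhds ((z:ℤ):ℝ) :=
      Ioo_mem_nhds (by exact_mod_cast hz1) (by exact_mod_cast hz2)
    filter_upwards [hmem] with u hu
    exact st13_eval_mid hα m ha ha' u hu.1.le hu.2
  exact continuousAt_const.congr hev.symm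

end Final

/-- Let `α ∈ (0,1)` be irrational, `n ≥ 3`, `aₙ ≥ 2` and `a_{n+1} = 1`.
Then `qₙ − q_{n-1}` and `2q_{n-1} + qₙ` are two successive elements of `𝔔(α)`. -/
theorem stmt13 (α : ℝ) (hα : Irrational α) (h0 : 0 < α) (h1 : α < 1)
    (n : ℕ) (hn : 3 ≤ n) (ha : 2 ≤ cfA α n) (ha' : cfA α (n + 1) = 1) :
    SuccessiveIn (QSet α)
      [cfDen α n - cfDen α (n - 1), 2 * cfDen α (n - 1) + cfDen α n] := by
  obtain ⟨m, rfl⟩ : ∃ m, n = m + 3 := ⟨n - 3, by omega⟩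
  have hred : m + 3 - 1 = m + 2 := rfl
  rw [hred]
  have ha2 : 2 ≤ cfA α (m+3) := ha
  have ha2' : cfA α (m+4) = 1 := ha'
  constructor
  · intro x hx
    simp only [List.mem_cons, List.mem_singleton, List.not_mem_nil, or_false] at hx
    rcases hx with rfl | rfl
    · exact st13_T1_mem hα m ha2 ha2'
    · exact st13_T2_mem hα m ha2 ha2'
  · refine List.isChain_cons_cons.mpr ⟨⟨?_, ?_⟩, List.isChain_singleton _⟩
    · have hQ1 := st13_cfDen_two_le hα m
      omega
    · rintro z hz ⟨hz1, hz2⟩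
      exact hz.2 (st13_between hα m ha2 ha2' z hz1 (by omega))
end
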